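/- arXiv:math/0210219 — 5 statements merged into one kernel-verified Lean document; each statement's English description precedes it below -/
import Mathlib

section
/- Let V be a finite-dimensional real vector space with a symmetric bilinear form ⟨·,·⟩, extended ℂ-bilinearly to V_ℂ = ℂ ⊗ V. (a) For every x ∈ V_ℂ with ⟨x,x⟩ = 0 and ⟨x + x̄, x + x̄⟩ > 0, the real span W_x of Re(x) and Im(x) is a 2-dimensional subspace of V on which the form is positive definite, and W_x depends only on the class [x] ∈ ℙ(V_ℂ). (b) Every 2-dimensional subspace W ⊂ V on which the form is positive definite equals W_x for some such x (e.g. x = w₁ + i w₂ for an orthonormal basis w₁, w₂ of W). (c) For two such elements x, y ∈ V_ℂ one has W_x = W_y if and only if [y] = [x] or [y] = [x̄] in ℙ(V_ℂ). -/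
lemma aux_span {V : Type*} [AddCommGroup V] [Module ℝ V] (u v : V) (c d e f : ℝ)
    (h : c * f - d * e ≠ 0) :
    Submodule.span ℝ ({c • u + d • v, e • u + f • v} : Set V) =
      Submodule.span ℝ ({u, v} : Set V) := by
  apply le_antisymm
  · rw [Submodule.span_le]
    rintro w (rfl | rfl) <;> rw [SetLike.mem_coe, Submodule.mem_span_pair]
    · exact ⟨c, d, rfl⟩
    · exact ⟨e, f, rfl⟩
  · rw [Submodule.span_le]
    rintro w (rfl | rfl) <;> rw [SetLike.mem_coe, Submodule.mem_span_pair]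
    · refine ⟨f / (c*f - d*e), -d / (c*f - d*e), ?_⟩
      match_scalars <;> rw [div_mul_eq_mul_div, div_mul_eq_mul_div, ← add_div, div_eq_iff h] <;> ring
    · refine ⟨-e / (c*f - d*e), c / (c*f - d*e), ?_⟩
      match_scalars <;> rw [div_mul_eq_mul_div, div_mul_eq_mul_div, ← add_div, div_eq_iff h] <;> ring

lemma aux_eval {V : Type*} [AddCommGroup V] [Module ℝ V]
    (b : LinearMap.BilinForm ℝ V) (hsymm : ∀ x y, b x y = b y x) (xr xi : V)
    (h1 : b xr xr = b xi xi) (h2 : b xr xi = 0) (p q r u : ℝ) :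
    b (p • xr + q • xi) (r • xr + u • xi) = (p * r + q * u) * b xr xr := by
  have h3 : b xi xr = 0 := (hsymm xi xr).trans h2
  simp only [map_add, map_smul, LinearMap.add_apply, LinearMap.smul_apply, smul_eq_mul,
    h2, h3, ← h1]
  ring

lemma aux_rank {V : Type*} [AddCommGroup V] [Module ℝ V]
    (b : LinearMap.BilinForm ℝ V) (hsymm : ∀ x y, b x y = b y x) (xr xi : V)
    (h1 : b xr xr = b xi xi) (h2 : b xr xi = 0) (h3 : 0 < b xr xr) :
    Module.finrank ℝ (Submodule.span ℝ ({xr, xi} : Set V)) = 2 := by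
  have hli : LinearIndependent ℝ ![xr, xi] := by
    rw [LinearIndependent.pair_iff]
    intro s t hst
    have e1 : b (s • xr + t • xi) xr = 0 := by rw [hst]; simp
    have e2 : b (s • xr + t • xi) xi = 0 := by rw [hst]; simp
    have h4 : b xi xr = 0 := (hsymm xi xr).trans h2
    simp only [map_add, map_smul, LinearMap.add_apply, LinearMap.smul_apply, smul_eq_mul,
      h2, h4, ← h1] at e1 e2
    constructor <;> nlinarith [h3]
  have := finrank_span_eq_card hli
  rw [show Set.range ![xr, xi] = {xr, xi} by
    simp [Matrix.range_cons, Matrix.range_empty, Set.pair_comm xi xr]] at this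
  exact this

lemma aux_posdef {V : Type*} [AddCommGroup V] [Module ℝ V]
    (b : LinearMap.BilinForm ℝ V) (hsymm : ∀ x y, b x y = b y x) (xr xi : V)
    (h1 : b xr xr = b xi xi) (h2 : b xr xi = 0) (h3 : 0 < b xr xr) :
    ∀ w ∈ Submodule.span ℝ ({xr, xi} : Set V), w ≠ 0 → 0 < b w w := by
  intro w hw hw0
  rw [Submodule.mem_span_pair] at hw
  obtain ⟨p, q, rfl⟩ := hw
  rw [aux_eval b hsymm xr xi h1 h2]
  have hpq : p ≠ 0 ∨ q ≠ 0 := by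
    by_contra h
    push_neg at h
    exact hw0 (by simp [h.1, h.2])
  rcases hpq with hp | hq
  · nlinarith [sq_nonneg q, mul_self_pos.mpr hp]
  · nlinarith [sq_nonneg p, mul_self_pos.mpr hq]

set_option maxHeartbeats 1000000 in
/-- We represent an element `x ∈ V_ℂ = ℂ ⊗ V` by the pair `(xr, xi)` of its real
and imaginary parts, so that `x = xr + i·xi`.  For the ℂ-bilinear extension of a symmetric
bilinear form `b`, the condition `⟨x,x⟩ = 0` reads `b xr xr = b xi xi ∧ b xr xi = 0`, and
`⟨x + x̄, x + x̄⟩ > 0` reads `0 < b xr xr`.  Multiplication by a nonzero complex scalar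
`c = s + i·t` sends `(xr, xi)` to `(s•xr − t•xi, s•xi + t•xr)`, and conjugation sends
`(xr, xi)` to `(xr, −xi)`; two elements give the same point of `ℙ(V_ℂ)` iff one is a nonzero
complex multiple of the other.  `W_x = span_ℝ(Re x, Im x)`. -/
theorem stmt2 {V : Type*} [AddCommGroup V] [Module ℝ V] [FiniteDimensional ℝ V]
    (b : LinearMap.BilinForm ℝ V) (hsymm : ∀ x y, b x y = b y x) :
    -- (a) W_x is a positive-definite plane, depending only on the class [x] ∈ ℙ(V_ℂ)
    (∀ xr xi : V, b xr xr = b xi xi → b xr xi = 0 → 0 < b xr xr →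
      Module.finrank ℝ (Submodule.span ℝ ({xr, xi} : Set V)) = 2 ∧
      (∀ w ∈ Submodule.span ℝ ({xr, xi} : Set V), w ≠ 0 → 0 < b w w) ∧
      (∀ s t : ℝ, ¬(s = 0 ∧ t = 0) →
        Submodule.span ℝ ({s • xr - t • xi, s • xi + t • xr} : Set V) =
          Submodule.span ℝ ({xr, xi} : Set V))) ∧
    -- (b) every positive-definite plane W ⊂ V arises as W_x for some such x
    (∀ W : Submodule ℝ V, Module.finrank ℝ W = 2 →
      (∀ w ∈ W, w ≠ 0 → 0 < b w w) →
      ∃ xr xi : V, b xr xr = b xi xi ∧ b xr xi = 0 ∧ 0 < b xr xr ∧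
        Submodule.span ℝ ({xr, xi} : Set V) = W) ∧
    -- (c) W_x = W_y iff [y] = [x] or [y] = [x̄] in ℙ(V_ℂ)
    (∀ xr xi yr yi : V,
      b xr xr = b xi xi → b xr xi = 0 → 0 < b xr xr →
      b yr yr = b yi yi → b yr yi = 0 → 0 < b yr yr →
      (Submodule.span ℝ ({xr, xi} : Set V) = Submodule.span ℝ ({yr, yi} : Set V) ↔
        ∃ s t : ℝ, ¬(s = 0 ∧ t = 0) ∧
          ((yr = s • xr - t • xi ∧ yi = s • xi + t • xr) ∨
           (yr = s • xr + t • xi ∧ yi = t • xr - s • xi)))) := by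
  refine ⟨?_, ?_, ?_⟩
  · -- (a)
    intro xr xi h1 h2 h3
    refine ⟨aux_rank b hsymm xr xi h1 h2 h3, aux_posdef b hsymm xr xi h1 h2 h3, ?_⟩
    intro s t hst
    have hdet : s * s - (-t) * t ≠ 0 := by
      intro h
      apply hst
      constructor <;> nlinarith [sq_nonneg s, sq_nonneg t]
    have := aux_span xr xi s (-t) t s hdet
    rw [show s • xr - t • xi = s • xr + (-t) • xi by module,
        show s • xi + t • xr = t • xr + s • xi by abel]
    exact this
  · -- (b)
    intro W hW2 hWpos
    have : FiniteDimensional ℝ W := inferInstance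
    obtain ⟨B⟩ : Nonempty (Module.Basis (Fin 2) ℝ W) := ⟨Module.finBasisOfFinrankEq ℝ W hW2⟩
    set w1 : V := (B 0 : V) with hw1
    set w2 : V := (B 1 : V) with hw2
    have hspanW : Submodule.span ℝ ({w1, w2} : Set V) = W := by
      apply le_antisymm
      · rw [Submodule.span_le]
        rintro w (rfl | rfl)
        · exact (B 0).2
        · exact (B 1).2
      · intro w hw
        have hrep : (⟨w, hw⟩ : W) = B.repr ⟨w, hw⟩ 0 • B 0 + B.repr ⟨w, hw⟩ 1 • B 1 := by
          conv_lhs => rw [← B.sum_repr ⟨w, hw⟩]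
          rw [Fin.sum_univ_two]
        have : w = B.repr ⟨w, hw⟩ 0 • w1 + B.repr ⟨w, hw⟩ 1 • w2 := by
          have := congrArg (Subtype.val) hrep
          simpa using this
        rw [this]
        exact Submodule.add_mem _
          (Submodule.smul_mem _ _ (Submodule.subset_span (Or.inl rfl)))
          (Submodule.smul_mem _ _ (Submodule.subset_span (Or.inr rfl)))
    have hw1W : w1 ∈ W := (B 0).2
    have hw1ne : w1 ≠ 0 := by
      simpa [hw1] using B.ne_zero 0
    have ha1 : 0 < b w1 w1 := hWpos w1 hw1W hw1ne
    set v : V := w2 - (b w1 w2 / b w1 w1) • w1 with hv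
    have hvW : v ∈ W := Submodule.sub_mem _ (B 1).2 (Submodule.smul_mem _ _ hw1W)
    have hvspan : Submodule.span ℝ ({w1, v} : Set V) = Submodule.span ℝ ({w1, w2} : Set V) := by
      have := aux_span w1 w2 1 0 (-(b w1 w2 / b w1 w1)) 1 (by norm_num)
      rw [show (1:ℝ) • w1 + (0:ℝ) • w2 = w1 by module,
          show (-(b w1 w2 / b w1 w1)) • w1 + (1:ℝ) • w2 = v by rw [hv]; module] at this
      exact this
    have hvne : v ≠ 0 := by
      intro h
      have : w2 = (b w1 w2 / b w1 w1) • w1 := by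
        rw [hv, sub_eq_zero] at h; exact h
      have hle : Submodule.span ℝ ({w1, w2} : Set V) ≤ Submodule.span ℝ ({w1} : Set V) := by
        rw [Submodule.span_le]
        rintro w (rfl | rfl)
        · exact Submodule.subset_span rfl
        · rw [this]
          exact Submodule.smul_mem _ _ (Submodule.subset_span rfl)
      have h1 : Module.finrank ℝ (Submodule.span ℝ ({w1} : Set V)) ≤ 1 := by
        simpa using finrank_span_le_card ({w1} : Set V)
      have h2 : (2:ℕ) ≤ Module.finrank ℝ (Submodule.span ℝ ({w1} : Set V)) := by
        calc (2:ℕ) = Module.finrank ℝ W := hW2.symm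
        _ = Module.finrank ℝ (Submodule.span ℝ ({w1, w2} : Set V)) := by rw [hspanW]
        _ ≤ _ := Submodule.finrank_mono hle
      omega
    have hbv : 0 < b v v := hWpos v hvW hvne
    have hortho : b w1 v = 0 := by
      rw [hv]
      simp only [map_sub, map_smul, smul_eq_mul]
      field_simp
      ring
    set c : ℝ := Real.sqrt (b w1 w1 / b v v) with hc
    have hcpos : 0 < c := Real.sqrt_pos.mpr (by positivity)
    refine ⟨w1, c • v, ?_, ?_, ha1, ?_⟩
    · simp only [map_smul, LinearMap.smul_apply, smul_eq_mul]
      rw [← mul_assoc, ← Real.sqrt_mul_self hcpos.le, hc]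
      rw [Real.sqrt_mul_self (by positivity)]
      field_simp
      rw [Real.sq_sqrt (by positivity)]
      field_simp
    · simp only [map_smul, smul_eq_mul, hortho, mul_zero]
    · have hscale : Submodule.span ℝ ({w1, c • v} : Set V) =
          Submodule.span ℝ ({w1, v} : Set V) := by
        have := aux_span w1 v 1 0 0 c (by simp [hcpos.ne'])
        rw [show (1:ℝ) • w1 + (0:ℝ) • v = w1 by module,
            show (0:ℝ) • w1 + c • v = c • v by module] at this
        exact this
      rw [hscale, hvspan, hspanW]
  · -- (c)
    intro xr xi yr yi hx1 hx2 hx3 hy1 hy2 hy3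
    constructor
    · intro hspan
      have hyr : yr ∈ Submodule.span ℝ ({xr, xi} : Set V) := by
        rw [hspan]; exact Submodule.subset_span (Or.inl rfl)
      have hyi : yi ∈ Submodule.span ℝ ({xr, xi} : Set V) := by
        rw [hspan]; exact Submodule.subset_span (Or.inr rfl)
      rw [Submodule.mem_span_pair] at hyr hyi
      obtain ⟨p, q, hpq⟩ := hyr
      obtain ⟨r, u, hru⟩ := hyi
      have e1 : (p * p + q * q) * b xr xr = (r * r + u * u) * b xr xr := by
        rw [← aux_eval b hsymm xr xi hx1 hx2 p q p q, ← aux_eval b hsymm xr xi hx1 hx2 r u r u,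
          hpq, hru, hy1]
      have e2 : (p * r + q * u) * b xr xr = 0 := by
        rw [← aux_eval b hsymm xr xi hx1 hx2 p q r u, hpq, hru, hy2]
      have e3 : 0 < (p * p + q * q) * b xr xr := by
        rw [← aux_eval b hsymm xr xi hx1 hx2 p q p q, hpq]; exact hy3
      have hne : b xr xr ≠ 0 := ne_of_gt hx3
      have e1' : p * p + q * q = r * r + u * u := by
        exact mul_right_cancel₀ hne e1
      have e2' : p * r + q * u = 0 := by
        rcases mul_eq_zero.mp e2 with h | h
        · exact h
        · exact absurd h hne
      have e3' : 0 < p * p + q * q := by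
        rcases mul_pos_iff.mp e3 with ⟨h, _⟩ | ⟨_, h'⟩
        · exact h
        · linarith
      have key : ((r + q)^2 + (u - p)^2) * ((r - q)^2 + (u + p)^2) = 0 := by
        linear_combination (p*p + q*q - r*r - u*u) * e1' + (4*(p*r + q*u)) * e2'
      rcases mul_eq_zero.mp key with h | h
      · have hrq : r + q = 0 := by
          have h' : (r + q)^2 = 0 := by linarith [h, sq_nonneg (r + q), sq_nonneg (u - p)]
          exact pow_eq_zero_iff two_ne_zero |>.mp h'
        have hup : u - p = 0 := by
          have h' : (u - p)^2 = 0 := by linarith [h, sq_nonneg (r + q), sq_nonneg (u - p)]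
          exact pow_eq_zero_iff two_ne_zero |>.mp h'
        have hr : r = -q := by linarith
        have hu : u = p := by linarith
        refine ⟨p, -q, ?_, Or.inl ⟨?_, ?_⟩⟩
        · rintro ⟨hp0, hq0⟩
          rw [hp0] at e3'
          rw [neg_eq_zero] at hq0
          rw [hq0] at e3'
          norm_num at e3'
        · rw [← hpq]; module
        · rw [← hru, hr, hu]; module
      · have hrq : r - q = 0 := by
          have h' : (r - q)^2 = 0 := by linarith [h, sq_nonneg (r - q), sq_nonneg (u + p)]
          exact pow_eq_zero_iff two_ne_zero |>.mp h'
        have hup : u + p = 0 := by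
          have h' : (u + p)^2 = 0 := by linarith [h, sq_nonneg (r - q), sq_nonneg (u + p)]
          exact pow_eq_zero_iff two_ne_zero |>.mp h'
        have hr : r = q := by linarith
        have hu : u = -p := by linarith
        refine ⟨p, q, ?_, Or.inr ⟨?_, ?_⟩⟩
        · rintro ⟨hp0, hq0⟩
          rw [hp0, hq0] at e3'
          exact absurd e3' (by norm_num)
        · rw [← hpq]
        · rw [← hru, hr, hu]; module
    · rintro ⟨s, t, hst, (⟨h1, h2⟩ | ⟨h1, h2⟩)⟩
      · have hdet : s * s - (-t) * t ≠ 0 := by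
          intro h; apply hst
          constructor <;> nlinarith [sq_nonneg s, sq_nonneg t]
        have := aux_span xr xi s (-t) t s hdet
        rw [show s • xr + (-t) • xi = yr by rw [h1]; module,
            show t • xr + s • xi = yi by rw [h2]; module] at this
        exact this.symm
      · have hdet : s * (-s) - t * t ≠ 0 := by
          intro h; apply hst
          constructor <;> nlinarith [sq_nonneg s, sq_nonneg t]
        have := aux_span xr xi s t t (-s) hdet
        rw [show s • xr + t • xi = yr by rw [h1],
            show t • xr + (-s) • xi = yi by rw [h2]; module] at this
        exact this.symm
end

section
/- Let V be a finite-dimensional real vector space with a nondegenerate symmetric bilinear form of signature (3, n) (maximal positive-definite subspaces have dimension 3), and let V ⊕ ℝw ⊕ ℝw* carry the hyperbolic extension of the form (V ⊥ (ℝw ⊕ ℝw*), w² = w*² = 0, ⟨w,w*⟩ = 1). For a 3-dimensional positive-definite subspace F ⊂ V, a real number α > 0 and B ∈ V, set F' = {f − ⟨f,B⟩w : f ∈ F} and B' = B + ((α − B²)/2)w + w*. Then the map φ(F, α, B) = ℝB' ⊕ F' is a bijection from the set {(F, α, B) : F ⊂ V a 3-dimensional positive-definite subspace, α ∈ ℝ_{>0},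 B ∈ V} onto the set of 4-dimensional subspaces Π ⊂ V ⊕ ℝw ⊕ ℝw* on which the form is positive definite. -/
/-- The hyperbolic extension form on `V × ℝ × ℝ`, where `(x, a, c)` represents
`x + a•w + c•w*`:  `V ⊥ (ℝw ⊕ ℝw*)`, `w² = w*² = 0`, `⟨w,w*⟩ = 1`. -/
noncomputable def hypPairing {V : Type*} [AddCommGroup V] [Module ℝ V]
    (b : LinearMap.BilinForm ℝ V) (p q : V × ℝ × ℝ) : ℝ :=
  b p.1 q.1 + p.2.1 * q.2.2 + p.2.2 * q.2.1

/-- The linear embedding `f ↦ f − ⟨f,B⟩w`, i.e. `f ↦ (f, −⟨f,B⟩, 0)`. -/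
noncomputable def embMap {V : Type*} [AddCommGroup V] [Module ℝ V]
    (b : LinearMap.BilinForm ℝ V) (B : V) : V →ₗ[ℝ] V × ℝ × ℝ :=
  LinearMap.prod LinearMap.id (LinearMap.prod (-(b.flip B)) 0)

/-- `φ(F, α, B) = ℝB' ⊕ F'` where `F' = {f − ⟨f,B⟩w : f ∈ F}` and
`B' = B + ((α − B²)/2)w + w*`. -/
noncomputable def phiSpace {V : Type*} [AddCommGroup V] [Module ℝ V]
    (b : LinearMap.BilinForm ℝ V) (F : Submodule ℝ V) (α : ℝ) (B : V) :
    Submodule ℝ (V × ℝ × ℝ) :=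
  Submodule.span ℝ {(B, (α - b B B) / 2, 1)} ⊔ F.map (embMap b B)

section aux
variable {V : Type*} [AddCommGroup V] [Module ℝ V]

lemma embMap_apply (b : LinearMap.BilinForm ℝ V) (B f : V) :
    embMap b B f = (f, -(b f B), 0) := rfl

lemma mem_phiSpace_iff {b : LinearMap.BilinForm ℝ V} {F : Submodule ℝ V} {α : ℝ} {B : V}
    {p : V × ℝ × ℝ} :
    p ∈ phiSpace b F α B ↔
      ∃ t : ℝ, ∃ f ∈ F, p = (t • B + f, t * ((α - b B B) / 2) + -(b f B), t) := by
  unfold phiSpace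
  rw [Submodule.mem_sup]
  constructor
  · rintro ⟨y, hy, z, hz, rfl⟩
    rw [Submodule.mem_span_singleton] at hy
    obtain ⟨t, rfl⟩ := hy
    obtain ⟨f, hf, rfl⟩ := hz
    exact ⟨t, f, hf, by simp [embMap_apply, Prod.ext_iff, smul_eq_mul]⟩
  · rintro ⟨t, f, hf, rfl⟩
    exact ⟨t • (B, (α - b B B)/2, 1), Submodule.smul_mem _ t (Submodule.mem_span_singleton_self _),
      embMap b B f, ⟨f, hf, rfl⟩, by simp [embMap_apply, Prod.ext_iff, smul_eq_mul]⟩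

lemma hypPairing_self {b : LinearMap.BilinForm ℝ V} (hsymm : ∀ x y, b x y = b y x)
    (t : ℝ) (f B : V) (α : ℝ) :
    hypPairing b (t • B + f, t * ((α - b B B) / 2) + -(b f B), t)
      (t • B + f, t * ((α - b B B) / 2) + -(b f B), t) = b f f + α * t ^ 2 := by
  simp only [hypPairing, map_add, map_smul, LinearMap.add_apply, LinearMap.smul_apply,
    smul_eq_mul]
  rw [hsymm B f]; ring

lemma finrank_map_eq_of' {M N : Type*} [AddCommGroup M] [Module ℝ M] [AddCommGroup N]
    [Module ℝ N] (g : M →ₗ[ℝ] N) (P : Submodule ℝ M) [FiniteDimensional ℝ P]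
    (h : ∀ p ∈ P, g p = 0 → p = 0) :
    Module.finrank ℝ (P.map g) = Module.finrank ℝ P := by
  have hr : P.map g = LinearMap.range (g.comp P.subtype) := by
    rw [LinearMap.range_comp, Submodule.range_subtype]
  have hker : LinearMap.ker (g.comp P.subtype) = ⊥ := by
    rw [LinearMap.ker_eq_bot']
    intro m hm
    exact Subtype.ext (h m.1 m.2 hm)
  have h2 := LinearMap.finrank_range_add_finrank_ker (g.comp P.subtype)
  rw [hker, finrank_bot, add_zero] at h2
  rw [hr, h2]

lemma finrank_inf_ker {M : Type*} [AddCommGroup M] [Module ℝ M]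
    (g : M →ₗ[ℝ] ℝ) (P : Submodule ℝ M) [FiniteDimensional ℝ P]
    (h : ∃ p ∈ P, g p ≠ 0) :
    Module.finrank ℝ ↥(P ⊓ LinearMap.ker g) + 1 = Module.finrank ℝ P := by
  obtain ⟨p, hp, hgp⟩ := h
  have h1 : LinearMap.range (g.comp P.subtype) = ⊤ := by
    rw [Submodule.eq_top_iff']
    intro x
    have hmem : g p ∈ LinearMap.range (g.comp P.subtype) := ⟨⟨p, hp⟩, rfl⟩
    have := Submodule.smul_mem _ (x * (g p)⁻¹) hmem
    rwa [smul_eq_mul, mul_assoc, inv_mul_cancel₀ hgp, mul_one] at this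
  have h2 := LinearMap.finrank_range_add_finrank_ker (g.comp P.subtype)
  rw [h1, finrank_top, Module.finrank_self] at h2
  have h3 : LinearMap.ker (g.comp P.subtype) = Submodule.comap P.subtype (LinearMap.ker g) :=
    LinearMap.ker_comp _ _
  have h4 := Submodule.finrank_map_subtype_eq P (Submodule.comap P.subtype (LinearMap.ker g))
  rw [Submodule.map_comap_subtype] at h4
  rw [h3] at h2
  rw [← h4] at h2
  omega

end aux

section parts
variable {V : Type*} [AddCommGroup V] [Module ℝ V]
open Module

lemma phi_posdef {b : LinearMap.BilinForm ℝ V} (hsymm : ∀ x y, b x y = b y x)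
    {F : Submodule ℝ V} (hF : ∀ x ∈ F, x ≠ 0 → 0 < b x x) {α : ℝ} (hα : 0 < α) (B : V) :
    ∀ p ∈ phiSpace b F α B, p ≠ 0 → 0 < hypPairing b p p := by
  intro p hp hp0
  obtain ⟨t, f, hf, rfl⟩ := mem_phiSpace_iff.mp hp
  rw [hypPairing_self hsymm]
  rcases eq_or_ne t 0 with rfl | ht
  · have hf0 : f ≠ 0 := by
      rintro rfl
      exact hp0 (by simp)
    have := hF f hf hf0
    nlinarith
  · rcases eq_or_ne f 0 with rfl | hf0
    · simp only [map_zero, LinearMap.zero_apply]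
      positivity
    · have := hF f hf hf0
      positivity

lemma phi_finrank [FiniteDimensional ℝ V] (b : LinearMap.BilinForm ℝ V)
    {F : Submodule ℝ V} (hF3 : finrank ℝ F = 3) (α : ℝ) (B : V) :
    finrank ℝ (phiSpace b F α B) = 4 := by
  have hgen : ((B, (α - b B B) / 2, 1) : V × ℝ × ℝ) ≠ 0 := by
    intro h
    have := congrArg (fun p : V × ℝ × ℝ => p.2.2) h
    simpa using this
  have h1 : finrank ℝ (Submodule.span ℝ {((B, (α - b B B) / 2, 1) : V × ℝ × ℝ)}) = 1 :=
    finrank_span_singleton hgen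
  have h2 : finrank ℝ (F.map (embMap b B)) = 3 := by
    rw [finrank_map_eq_of' _ _ (fun f _ h0 => by
      have := congrArg Prod.fst h0
      simpa [embMap_apply] using this), hF3]
  have hinf : Submodule.span ℝ {((B, (α - b B B) / 2, 1) : V × ℝ × ℝ)} ⊓
      F.map (embMap b B) = ⊥ := by
    rw [eq_bot_iff]
    intro x hx
    rw [Submodule.mem_inf] at hx
    obtain ⟨hx1, hx2⟩ := hx
    rw [Submodule.mem_span_singleton] at hx1
    obtain ⟨c, rfl⟩ := hx1
    obtain ⟨f, _, hfx⟩ := hx2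
    have h3 : c = 0 := by
      have := congrArg (fun p : V × ℝ × ℝ => p.2.2) hfx
      simpa [embMap_apply] using this.symm
    simp [h3]
  have h4 := Submodule.finrank_sup_add_finrank_inf_eq
    (Submodule.span ℝ {((B, (α - b B B) / 2, 1) : V × ℝ × ℝ)}) (F.map (embMap b B))
  rw [hinf, finrank_bot, h1, h2] at h4
  rw [phiSpace]
  convert h4 using 1
  exact (add_zero _).symm

lemma phi_inj [FiniteDimensional ℝ V] {b : LinearMap.BilinForm ℝ V}
    (hsymm : ∀ x y, b x y = b y x)
    {F₁ F₂ : Submodule ℝ V} {α₁ α₂ : ℝ} {B₁ B₂ : V}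
    (hF₁ : ∀ x ∈ F₁, x ≠ 0 → 0 < b x x)
    (heq : phiSpace b F₁ α₁ B₁ = phiSpace b F₂ α₂ B₂) :
    F₁ = F₂ ∧ α₁ = α₂ ∧ B₁ = B₂ := by
  have key : ∀ (F F' : Submodule ℝ V) (α α' : ℝ) (B B' : V),
      phiSpace b F α B = phiSpace b F' α' B' →
      ∀ f ∈ F, f ∈ F' ∧ b f B = b f B' := by
    intro F F' α α' B B' h f hf
    have hmem : embMap b B f ∈ phiSpace b F' α' B' := by
      rw [← h]
      exact Submodule.mem_sup_right ⟨f, hf, rfl⟩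
    obtain ⟨t, g, hg, hgx⟩ := mem_phiSpace_iff.mp hmem
    rw [embMap_apply, Prod.ext_iff, Prod.ext_iff] at hgx
    obtain ⟨e1, e2, e3⟩ := hgx
    simp only at e1 e2 e3
    subst e3
    rw [zero_smul, zero_add] at e1
    subst e1
    rw [zero_mul, zero_add] at e2
    constructor
    · exact hg
    · linarith [e2]
  have hFle : F₁ ≤ F₂ := fun f hf => (key _ _ _ _ _ _ heq f hf).1
  have hFle' : F₂ ≤ F₁ := fun f hf => (key _ _ _ _ _ _ heq.symm f hf).1
  have hF : F₁ = F₂ := le_antisymm hFle hFle'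
  -- gen₂ ∈ phiSpace₁
  have hmem : ((B₂, (α₂ - b B₂ B₂) / 2, 1) : V × ℝ × ℝ) ∈ phiSpace b F₁ α₁ B₁ := by
    rw [heq]
    exact Submodule.mem_sup_left (Submodule.mem_span_singleton_self _)
  obtain ⟨t, f, hf, hgx⟩ := mem_phiSpace_iff.mp hmem
  rw [Prod.ext_iff, Prod.ext_iff] at hgx
  obtain ⟨e1, e2, e3⟩ := hgx
  simp only at e1 e2 e3
  subst e3
  rw [one_smul] at e1
  have hbf : b f B₁ = b f B₂ := (key _ _ _ _ _ _ heq f hf).2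
  have hbf2 : b f B₂ = b f B₁ + b f f := by
    rw [e1]; simp
  have hff : b f f = 0 := by linarith
  have hf0 : f = 0 := by
    by_contra h0
    exact absurd hff (ne_of_gt (hF₁ f hf h0))
  subst hf0
  rw [add_zero] at e1
  subst e1
  refine ⟨hF, ?_, rfl⟩
  simp only [map_zero, LinearMap.zero_apply, map_zero] at e2
  -- e2 : (α₂ - b B₁ B₁)/2 = 1 * ((α₁ - b B₁ B₁)/2) + -0 or similar
  linarith [e2]

end parts

section surj
variable {V : Type*} [AddCommGroup V] [Module ℝ V]
open Module

lemma phi_surj [FiniteDimensional ℝ V] {b : LinearMap.BilinForm ℝ V}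
    (hsymm : ∀ x y, b x y = b y x)
    (hnd : ∀ x : V, (∀ y, b x y = 0) → x = 0)
    (hmax : ∀ F : Submodule ℝ V, (∀ x ∈ F, x ≠ 0 → 0 < b x x) → finrank ℝ F ≤ 3)
    (Pl : Submodule ℝ (V × ℝ × ℝ)) (h4 : finrank ℝ Pl = 4)
    (hpos : ∀ p ∈ Pl, p ≠ 0 → 0 < hypPairing b p p) :
    ∃ (F : Submodule ℝ V) (α : ℝ) (B : V), finrank ℝ F = 3 ∧ (∀ x ∈ F, x ≠ 0 → 0 < b x x) ∧ 0 < α ∧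
      phiSpace b F α B = Pl := by
  set fstm := LinearMap.fst ℝ V (ℝ × ℝ) with hfstm
  set third := (LinearMap.snd ℝ ℝ ℝ).comp (LinearMap.snd ℝ V (ℝ × ℝ)) with hthird
  have third_apply : ∀ p : V × ℝ × ℝ, third p = p.2.2 := fun p => rfl
  -- (a) there is a vector with nonzero w*-coordinate
  have hex : ∃ p ∈ Pl, p.2.2 ≠ 0 := by
    by_contra hc
    push_neg at hc
    have hinj : ∀ p ∈ Pl, fstm p = 0 → p = 0 := by
      intro p hp hp1
      by_contra hne
      have hq := hpos p hp hne
      have hz : hypPairing b p p = 0 := by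
        simp only [hypPairing]
        rw [show p.1 = 0 from hp1, hc p hp]
        simp
      linarith
    have hrank : finrank ℝ (Pl.map fstm) = 4 := by rw [finrank_map_eq_of' fstm Pl hinj, h4]
    have hposG : ∀ x ∈ Pl.map fstm, x ≠ 0 → 0 < b x x := by
      intro x hx hxne
      obtain ⟨p, hp, rfl⟩ := Submodule.mem_map.mp hx
      have hpne : p ≠ 0 := fun h => hxne (by rw [h]; rfl)
      have h5 := hpos p hp hpne
      simp only [hypPairing, hc p hp, mul_zero, zero_mul, add_zero] at h5
      exact h5
    have := hmax (Pl.map fstm) hposG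
    omega
  obtain ⟨p₀, hp₀, hp₀3⟩ := hex
  set q₀ := (p₀.2.2)⁻¹ • p₀ with hq₀def
  have hq₀ : q₀ ∈ Pl := Submodule.smul_mem _ _ hp₀
  have hq₀3 : q₀.2.2 = 1 := by
    rw [show q₀.2.2 = (p₀.2.2)⁻¹ * p₀.2.2 from rfl, inv_mul_cancel₀ hp₀3]
  -- (c) the kernel slice
  set P₀ := Pl ⊓ LinearMap.ker third with hP₀def
  have hP₀mem : ∀ p : V × ℝ × ℝ, p ∈ P₀ ↔ p ∈ Pl ∧ p.2.2 = 0 := by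
    intro p
    rw [hP₀def, Submodule.mem_inf, LinearMap.mem_ker, third_apply]
  have hP₀rank : finrank ℝ P₀ = 3 := by
    have h5 := finrank_inf_ker third Pl ⟨q₀, hq₀, by rw [third_apply, hq₀3]; exact one_ne_zero⟩
    rw [h4, ← hP₀def] at h5
    omega
  -- (d) injectivity of the first projection on P₀
  have hzero : ∀ p ∈ P₀, p.1 = 0 → p = 0 := by
    intro p hp hp1
    obtain ⟨hpl, hp3⟩ := (hP₀mem p).mp hp
    by_contra hne
    have ha : p.2.1 ≠ 0 := by
      intro h
      exact hne (Prod.ext hp1 (Prod.ext h hp3))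
    set α₀ := hypPairing b q₀ q₀ with hα₀
    have hq₀ne : q₀ ≠ 0 := fun h => by rw [h] at hq₀3; simp at hq₀3
    have hα₀pos : 0 < α₀ := hpos q₀ hq₀ hq₀ne
    set s := -α₀ / p.2.1 with hs
    have hmem : q₀ + s • p ∈ Pl := Submodule.add_mem _ hq₀ (Submodule.smul_mem _ _ hpl)
    have hne2 : q₀ + s • p ≠ 0 := by
      intro h
      have h6 := congrArg (fun r : V × ℝ × ℝ => r.2.2) h
      simp only [Prod.snd_add, Prod.smul_snd, smul_eq_mul, hp3, mul_zero, add_zero,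
        Prod.snd_zero] at h6
      rw [hq₀3] at h6
      exact one_ne_zero h6
    have hQ : hypPairing b (q₀ + s • p) (q₀ + s • p) = α₀ + 2 * (s * p.2.1) := by
      simp only [hypPairing, hα₀, Prod.fst_add, Prod.snd_add, Prod.smul_fst, Prod.smul_snd,
        smul_eq_mul, hp1, hp3, smul_zero, add_zero, mul_zero, hq₀3]
      ring
    have hsp : s * p.2.1 = -α₀ := by
      rw [hs]; field_simp
    have h7 := hpos _ hmem hne2
    rw [hQ, hsp] at h7
    linarith
  -- (e) F
  set F := P₀.map fstm with hF
  have hF3 : finrank ℝ F = 3 := by rw [hF, finrank_map_eq_of' fstm P₀ hzero, hP₀rank]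
  have hFpos : ∀ x ∈ F, x ≠ 0 → 0 < b x x := by
    intro x hx hxne
    rw [hF] at hx
    obtain ⟨p, hp, rfl⟩ := Submodule.mem_map.mp hx
    obtain ⟨hpl, hp3⟩ := (hP₀mem p).mp hp
    have hpne : p ≠ 0 := fun h => hxne (by rw [h]; rfl)
    have h5 := hpos p hpl hpne
    simp only [hypPairing, hp3, mul_zero, zero_mul, add_zero] at h5
    exact h5
  -- (f) the linear functional
  set e := fstm.comp P₀.subtype with he
  have heinj : Function.Injective e := by
    intro q q' hqq'
    have h1 : ((q : V × ℝ × ℝ) - q') ∈ P₀ := Submodule.sub_mem _ q.2 q'.2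
    have h2 : ((q : V × ℝ × ℝ) - q').1 = 0 := by
      have h3 : (q : V × ℝ × ℝ).1 = (q' : V × ℝ × ℝ).1 := hqq'
      rw [Prod.fst_sub, h3, sub_self]
    have h4' := hzero _ h1 h2
    exact Subtype.ext (by rwa [sub_eq_zero] at h4')
  have hrange : LinearMap.range e = F := by
    rw [he, LinearMap.range_comp, Submodule.range_subtype, hF]
  set sndm := ((LinearMap.fst ℝ ℝ ℝ).comp (LinearMap.snd ℝ V (ℝ × ℝ))) with hsndm
  set ℓ : LinearMap.range e →ₗ[ℝ] ℝ :=
    (sndm.comp P₀.subtype).comp (LinearEquiv.ofInjective e heinj).symm.toLinearMap with hℓ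
  obtain ⟨φ, hφ⟩ := LinearMap.exists_extend ℓ
  have hφval : ∀ p ∈ P₀, φ p.1 = p.2.1 := by
    intro p hp
    have hmem : p.1 ∈ LinearMap.range e := ⟨⟨p, hp⟩, rfl⟩
    have h1 : φ p.1 = ℓ ⟨p.1, hmem⟩ := (LinearMap.congr_fun hφ ⟨p.1, hmem⟩).symm.symm
    rw [h1, hℓ]
    have h2 : (⟨p.1, hmem⟩ : LinearMap.range e) = LinearEquiv.ofInjective e heinj ⟨p, hp⟩ := by
      apply Subtype.ext
      rw [LinearEquiv.ofInjective_apply]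
      rfl
    simp only [LinearMap.comp_apply, LinearEquiv.coe_coe, h2, LinearEquiv.symm_apply_apply]
    rfl
  -- B₁ via toDual
  have hndg : b.Nondegenerate :=
    ⟨hnd, fun y hy => hnd y (fun x => by rw [hsymm]; exact hy x)⟩
  set B₁ := (b.toDual hndg).symm (-φ) with hB₁
  have hB₁val : ∀ y, b B₁ y = -(φ y) := by
    intro y
    rw [hB₁, LinearMap.BilinForm.apply_toDual_symm_apply]
    rfl
  -- orthogonal decomposition
  have hrefl : b.IsRefl := fun x y h => by rw [hsymm]; exact h
  have hrest : (b.restrict F).Nondegenerate := by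
    constructor <;> intro x hx <;>
    by_contra h0 <;>
    have hxne : (x : V) ≠ 0 := fun h => h0 (Subtype.ext h) <;>
    have h5 := hx x <;>
    rw [LinearMap.BilinForm.restrict_apply] at h5 <;>
    exact absurd h5 (ne_of_gt (hFpos x.1 x.2 hxne))
  have hcompl := LinearMap.BilinForm.isCompl_orthogonal_of_restrict_nondegenerate hrefl hrest
  have hD : q₀.1 - B₁ ∈ F ⊔ b.orthogonal F := by rw [hcompl.sup_eq_top]; trivial
  rw [Submodule.mem_sup] at hD
  obtain ⟨f, hf, g, hg, hfg⟩ := hD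
  set B := q₀.1 - f with hBdef
  have hBalt : B = B₁ + g := by
    rw [hBdef]
    have h5 : q₀.1 = f + g + B₁ := by rw [hfg]; abel
    rw [h5]; abel
  have hK1 : ∀ x ∈ F, b x B = -(φ x) := by
    intro x hx
    have h1 : b x g = 0 := (LinearMap.BilinForm.mem_orthogonal_iff.mp hg) x hx
    rw [hBalt, map_add, h1, add_zero, hsymm, hB₁val]
  have hK2 : ∀ p ∈ P₀, embMap b B p.1 = p := by
    intro p hp
    obtain ⟨hpl, hp3⟩ := (hP₀mem p).mp hp
    have hmem : p.1 ∈ F := by rw [hF]; exact ⟨p, hp, rfl⟩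
    rw [embMap_apply, hK1 p.1 hmem, hφval p hp, neg_neg]
    exact Prod.ext rfl (Prod.ext rfl hp3.symm)
  -- the generator
  have hnf : -f ∈ P₀.map fstm := by rw [← hF]; exact F.neg_mem hf
  obtain ⟨p', hp', hp'1⟩ := Submodule.mem_map.mp hnf
  set q₁ := q₀ + p' with hq₁def
  have hq₁ : q₁ ∈ Pl := Submodule.add_mem _ hq₀ ((hP₀mem p').mp hp').1
  have hq₁1 : q₁.1 = B := by
    rw [hq₁def, hBdef]
    show q₀.1 + p'.1 = q₀.1 - f
    rw [show p'.1 = -f from hp'1]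
    abel
  have hq₁3 : q₁.2.2 = 1 := by
    show q₀.2.2 + p'.2.2 = 1
    rw [hq₀3, ((hP₀mem p').mp hp').2, add_zero]
  have hq₁ne : q₁ ≠ 0 := fun h => by rw [h] at hq₁3; simp at hq₁3
  set α := hypPairing b q₁ q₁ with hα
  have hαpos : 0 < α := hpos q₁ hq₁ hq₁ne
  have hgen : ((B, (α - b B B) / 2, 1) : V × ℝ × ℝ) = q₁ := by
    have hα2 : α = b B B + 2 * q₁.2.1 := by
      rw [hα]
      simp only [hypPairing, hq₁1, hq₁3]
      ring
    refine Prod.ext hq₁1.symm (Prod.ext ?_ hq₁3.symm)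
    show (α - b B B) / 2 = q₁.2.1
    rw [hα2]; ring
  -- inclusion and conclusion
  have hle : phiSpace b F α B ≤ Pl := by
    rw [phiSpace]
    apply sup_le
    · rw [Submodule.span_le, Set.singleton_subset_iff]
      show ((B, (α - b B B) / 2, 1) : V × ℝ × ℝ) ∈ Pl
      rw [hgen]
      exact hq₁
    · rw [Submodule.map_le_iff_le_comap]
      intro x hx
      rw [hF] at hx
      obtain ⟨p, hp, rfl⟩ := Submodule.mem_map.mp hx
      show embMap b B (fstm p) ∈ Pl
      rw [show fstm p = p.1 from rfl, hK2 p hp]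
      exact ((hP₀mem p).mp hp).1
  have heq : phiSpace b F α B = Pl :=
    Submodule.eq_of_le_of_finrank_eq hle (by rw [phi_finrank b hF3, h4])
  exact ⟨F, α, B, hF3, hFpos, hαpos, heq⟩

end surj

/-- `φ` is a bijection from the set of triples `(F, α, B)` (with `F ⊂ V` a 3-dimensional
positive-definite subspace, `α > 0`, `B ∈ V`) onto the set of 4-dimensional positive-definite
subspaces of `V ⊕ ℝw ⊕ ℝw*`. -/
theorem stmt3 {V : Type*} [AddCommGroup V] [Module ℝ V] [FiniteDimensional ℝ V]
    (b : LinearMap.BilinForm ℝ V)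
    (hsymm : ∀ x y, b x y = b y x)
    (hnd : ∀ x : V, (∀ y, b x y = 0) → x = 0)
    (hsig : ∃ F : Submodule ℝ V, Module.finrank ℝ F = 3 ∧ ∀ x ∈ F, x ≠ 0 → 0 < b x x)
    (hmax : ∀ F : Submodule ℝ V, (∀ x ∈ F, x ≠ 0 → 0 < b x x) → Module.finrank ℝ F ≤ 3) :
    -- φ is well defined: its values are 4-dimensional positive-definite subspaces
    (∀ (F : Submodule ℝ V) (α : ℝ) (B : V),
      Module.finrank ℝ F = 3 → (∀ x ∈ F, x ≠ 0 → 0 < b x x) → 0 < α →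
      Module.finrank ℝ (phiSpace b F α B) = 4 ∧
        ∀ p ∈ phiSpace b F α B, p ≠ 0 → 0 < hypPairing b p p) ∧
    -- φ is injective
    (∀ (F₁ F₂ : Submodule ℝ V) (α₁ α₂ : ℝ) (B₁ B₂ : V),
      Module.finrank ℝ F₁ = 3 → (∀ x ∈ F₁, x ≠ 0 → 0 < b x x) → 0 < α₁ →
      Module.finrank ℝ F₂ = 3 → (∀ x ∈ F₂, x ≠ 0 → 0 < b x x) → 0 < α₂ →
      phiSpace b F₁ α₁ B₁ = phiSpace b F₂ α₂ B₂ →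
      F₁ = F₂ ∧ α₁ = α₂ ∧ B₁ = B₂) ∧
    -- φ is surjective
    (∀ Pl : Submodule ℝ (V × ℝ × ℝ),
      Module.finrank ℝ Pl = 4 → (∀ p ∈ Pl, p ≠ 0 → 0 < hypPairing b p p) →
      ∃ (F : Submodule ℝ V) (α : ℝ) (B : V),
        Module.finrank ℝ F = 3 ∧ (∀ x ∈ F, x ≠ 0 → 0 < b x x) ∧ 0 < α ∧
        phiSpace b F α B = Pl) := by
  refine ⟨?_, ?_, ?_⟩
  · intro F α B hF3 hFpos hα
    exact ⟨phi_finrank b hF3 α B, phi_posdef hsymm hFpos hα B⟩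
  · intro F₁ F₂ α₁ α₂ B₁ B₂ _ hF₁pos _ _ _ _ heq
    exact phi_inj hsymm hF₁pos heq
  · intro Pl h4 hpos
    exact phi_surj hsymm hnd hmax Pl h4 hpos
end

section
/- Let V be a finite-dimensional real vector space with a nondegenerate symmetric bilinear form of signature (3, b−3) with b = dim V > 3. Then the period domain Q = {[x] ∈ ℙ(V_ℂ) : ⟨x,x⟩ = 0 and ⟨x + x̄, x + x̄⟩ > 0} is a connected topological space. -/
open Matrix
open scoped LinearAlgebra.Projectivization

/-- The quotient topology on a projectivization. -/
noncomputable instance projTopology {K V : Type*} [DivisionRing K] [AddCommGroup V]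
    [Module K V] [TopologicalSpace V] : TopologicalSpace (ℙ K V) :=
  inferInstanceAs (TopologicalSpace (Quotient (projectivizationSetoid K V)))

/-- The real bilinear form with Gram matrix `G` on `ℝ^b`. -/
noncomputable def formR {b : ℕ} (G : Matrix (Fin b) (Fin b) ℝ) (x y : Fin b → ℝ) : ℝ :=
  x ⬝ᵥ (G *ᵥ y)

/-- The ℂ-bilinear extension of the form to `V_ℂ = ℂ^b`. -/
noncomputable def formC {b : ℕ} (G : Matrix (Fin b) (Fin b) ℝ) (x y : Fin b → ℂ) : ℂ :=
  x ⬝ᵥ ((G.map Complex.ofReal) *ᵥ y)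

/-- The period domain `Q = {[x] ∈ ℙ(V_ℂ) : ⟨x,x⟩ = 0, ⟨x + x̄, x + x̄⟩ > 0}`. -/
def periodDomain {b : ℕ} (G : Matrix (Fin b) (Fin b) ℝ) : Set (ℙ ℂ (Fin b → ℂ)) :=
  {p | ∃ (z : Fin b → ℂ) (hz : z ≠ 0), p = Projectivization.mk ℂ z hz ∧
    formC G z z = 0 ∧ 0 < (formC G (z + star z) (z + star z)).re}

namespace PD
open unitInterval
variable {b : ℕ} (G : Matrix (Fin b) (Fin b) ℝ)

lemma fR_add_left (x y z : Fin b → ℝ) : formR G (x + y) z = formR G x z + formR G y z := by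
  simp [formR, add_dotProduct]
lemma fR_add_right (x y z : Fin b → ℝ) : formR G x (y + z) = formR G x y + formR G x z := by
  simp [formR, mulVec_add, dotProduct_add]
lemma fR_smul_left (c : ℝ) (x y : Fin b → ℝ) : formR G (c • x) y = c * formR G x y := by
  simp [formR, smul_dotProduct]
lemma fR_smul_right (c : ℝ) (x y : Fin b → ℝ) : formR G x (c • y) = c * formR G x y := by
  simp [formR, mulVec_smul, dotProduct_smul]
lemma fR_sub_left (x y z : Fin b → ℝ) : formR G (x - y) z = formR G x z - formR G y z := by
  simp [formR, sub_dotProduct]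
lemma fR_sub_right (x y z : Fin b → ℝ) : formR G x (y - z) = formR G x y - formR G x z := by
  simp [formR, mulVec_sub, dotProduct_sub]
lemma fR_symm (hs : G.IsSymm) (x y : Fin b → ℝ) : formR G x y = formR G y x := by
  rw [formR, formR]
  conv_lhs => rw [← hs.eq]
  rw [mulVec_transpose, dotProduct_comm, ← dotProduct_mulVec]
lemma fR_zero_left (y : Fin b → ℝ) : formR G 0 y = 0 := by simp [formR]
lemma fR_zero_right (x : Fin b → ℝ) : formR G x 0 = 0 := by simp [formR]

end PD

namespace PD
variable {b : ℕ} (G : Matrix (Fin b) (Fin b) ℝ)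

def cx (u : Fin b → ℝ) : Fin b → ℂ := fun i => (u i : ℂ)

lemma fC_add_left (x y z : Fin b → ℂ) : formC G (x + y) z = formC G x z + formC G y z := by
  simp [formC, add_dotProduct]
lemma fC_add_right (x y z : Fin b → ℂ) : formC G x (y + z) = formC G x y + formC G x z := by
  simp [formC, mulVec_add, dotProduct_add]
lemma fC_smul_left (c : ℂ) (x y : Fin b → ℂ) : formC G (c • x) y = c * formC G x y := by
  simp [formC, smul_dotProduct]
lemma fC_smul_right (c : ℂ) (x y : Fin b → ℂ) : formC G x (c • y) = c * formC G x y := by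
  simp [formC, mulVec_smul, dotProduct_smul]

lemma fC_cx (u v : Fin b → ℝ) : formC G (cx u) (cx v) = ((formR G u v : ℝ) : ℂ) := by
  simp only [formC, formR, cx, Matrix.mulVec, dotProduct, Matrix.map_apply]
  push_cast
  ring

def PSet : Set ((Fin b → ℝ) × (Fin b → ℝ)) :=
  {p | formR G p.1 p.1 = formR G p.2 p.2 ∧ formR G p.1 p.2 = 0 ∧ 0 < formR G p.1 p.1}

lemma cx_decomp (z : Fin b → ℂ) :
    z = cx (fun i => (z i).re) + Complex.I • cx (fun i => (z i).im) := by
  funext i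
  simp [cx, Complex.ext_iff]

lemma star_cx (z : Fin b → ℂ) :
    star z = cx (fun i => (z i).re) - Complex.I • cx (fun i => (z i).im) := by
  funext i
  simp [cx, Complex.ext_iff]

lemma key_iff (hs : G.IsSymm) (z : Fin b → ℂ) :
    (formC G z z = 0 ∧ 0 < (formC G (z + star z) (z + star z)).re) ↔
      ((fun i => (z i).re), (fun i => (z i).im)) ∈ PSet G := by
  set u : Fin b → ℝ := fun i => (z i).re with hu
  set v : Fin b → ℝ := fun i => (z i).im with hv
  have hz : z = cx u + Complex.I • cx v := cx_decomp z
  have hzs : star z = cx u - Complex.I • cx v := star_cx z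
  have h1 : formC G z z =
      Complex.ofReal (formR G u u - formR G v v) +
        Complex.I * Complex.ofReal (2 * formR G u v) := by
    rw [hz]
    simp only [fC_add_left, fC_add_right, fC_smul_left, fC_smul_right, fC_cx]
    have hsym : formR G v u = formR G u v := fR_symm G hs v u
    push_cast
    rw [hsym]
    ring_nf
    simp [Complex.I_sq]
    ring
  have h2 : z + star z = (2:ℂ) • cx u := by
    rw [hzs]; nth_rewrite 1 [hz]; funext i; simp [cx]; ring
  have h3 : (formC G (z + star z) (z + star z)).re = 4 * formR G u u := by
    rw [h2, fC_smul_left, fC_smul_right, fC_cx]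
    simp; ring
  constructor
  · rintro ⟨hA, hB⟩
    rw [h1] at hA
    have hre := congrArg Complex.re hA
    have him := congrArg Complex.im hA
    simp at hre him
    rw [h3] at hB
    refine ⟨by linarith, by linarith, by linarith⟩
  · rintro ⟨hQ, hB, hpos⟩
    constructor
    · rw [h1]
      simp only [PSet] at *
      rw [hB]
      simp [sub_eq_zero, hQ]
    · rw [h3]; linarith

def Cpy (F : Submodule ℝ (Fin b → ℝ)) : Type := F
noncomputable instance (F : Submodule ℝ (Fin b → ℝ)) : AddCommGroup (Cpy F) :=
  inferInstanceAs (AddCommGroup F)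
noncomputable instance (F : Submodule ℝ (Fin b → ℝ)) : Module ℝ (Cpy F) :=
  inferInstanceAs (Module ℝ F)

lemma exists_triple (hs : G.IsSymm) (F : Submodule ℝ (Fin b → ℝ))
    (h3 : Module.finrank ℝ F = 3)
    (hpos : ∀ x ∈ F, x ≠ 0 → 0 < formR G x x) :
    ∃ g : Fin 3 → (Fin b → ℝ), (∀ i, g i ∈ F) ∧
      (∀ i j, formR G (g i) (g j) = if i = j then 1 else 0) ∧
      (∀ f ∈ F, f = ∑ i, formR G f (g i) • g i) := by
  have hposF : ∀ x : F, x ≠ 0 → 0 < formR G x.1 x.1 := by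
    intro x hx
    refine hpos x.1 x.2 ?_
    exact fun h => hx (Subtype.coe_injective h)
  letI core : InnerProductSpace.Core ℝ (Cpy F) :=
    { toInner := ⟨fun x y => formR G x.1 y.1⟩
      conj_inner_symm := fun x y => by
        change (starRingEnd ℝ) (formR G y.1 x.1) = formR G x.1 y.1
        simpa using fR_symm G hs y.1 x.1
      re_inner_nonneg := fun x => by
        change (0:ℝ) ≤ formR G x.1 x.1
        rcases eq_or_ne x 0 with h | h
        · rw [h]; show (0:ℝ) ≤ formR G 0 0; rw [fR_zero_left]
        · exact le_of_lt (hposF x h)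
      definite := fun x hx => by
        by_contra h
        have hx' : formR G x.1 x.1 = 0 := hx
        exact absurd hx' (ne_of_gt (hposF x h))
      add_left := fun x y z => by
        change formR G (x.1 + y.1) z.1 = formR G x.1 z.1 + formR G y.1 z.1
        exact fR_add_left G x.1 y.1 z.1
      smul_left := fun x y r => by
        change formR G (r • x.1) y.1 = (starRingEnd ℝ) r * formR G x.1 y.1
        simpa using fR_smul_left G r x.1 y.1 }
  letI : NormedAddCommGroup (Cpy F) := core.toNormedAddCommGroup
  letI : InnerProductSpace ℝ (Cpy F) := InnerProductSpace.ofCore core.toCore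
  haveI : FiniteDimensional ℝ (Cpy F) := by
    have : FiniteDimensional ℝ F := Module.finite_of_finrank_eq_succ h3
    exact this
  have h3' : Module.finrank ℝ (Cpy F) = 3 := h3
  let bas : OrthonormalBasis (Fin 3) ℝ (Cpy F) :=
    (stdOrthonormalBasis ℝ (Cpy F)).reindex (finCongr h3')
  refine ⟨fun i => (bas i).1, fun i => (bas i).2, ?_, ?_⟩
  · intro i j
    have := orthonormal_iff_ite.mp bas.orthonormal i j
    exact this
  · intro f hf
    have hrepr := bas.sum_repr' (⟨f, hf⟩ : Cpy F)
    have h2 : (Subtype.val (α := Fin b → ℝ)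
        (show F from ∑ i : Fin 3, (inner ℝ (bas i) (⟨f, hf⟩ : Cpy F) : ℝ) • bas i)) = f :=
      congrArg Subtype.val hrepr
    have h3 : (Subtype.val (α := Fin b → ℝ)
        (show F from ∑ i : Fin 3, (inner ℝ (bas i) (⟨f, hf⟩ : Cpy F) : ℝ) • bas i))
        = ∑ i : Fin 3, formR G f (bas i).1 • (bas i).1 := by
      dsimp only
      erw [Submodule.coe_sum]
      refine Finset.sum_congr rfl ?_
      intro i _
      erw [SetLike.val_smul]
      congr 1
      show formR G (bas i).1 f = formR G f (bas i).1
      exact fR_symm G hs _ _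
    exact h2.symm.trans h3

noncomputable def rot (p q : Fin b → ℝ) (c s : ℝ) (v : Fin b → ℝ) : Fin b → ℝ :=
  v + (c - 1) • (formR G v p • p + formR G v q • q) +
    s • (formR G v p • q - formR G v q • p)

lemma rot_eq (p q v : Fin b → ℝ) (c s : ℝ) :
    rot G p q c s v = v + (c - 1) • (formR G v p • p + formR G v q • q) +
      s • (formR G v p • q - formR G v q • p) := rfl

lemma rot_form (hsym : G.IsSymm) (p q : Fin b → ℝ)
    (hp : formR G p p = 1) (hq : formR G q q = 1) (hpq : formR G p q = 0)
    (c s : ℝ) (hcs : c ^ 2 + s ^ 2 = 1) (v w : Fin b → ℝ) :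
    formR G (rot G p q c s v) (rot G p q c s w) = formR G v w := by
  have hqp : formR G q p = 0 := (fR_symm G hsym q p).trans hpq
  have h1 : formR G p v = formR G v p := fR_symm G hsym p v
  have h2 : formR G q v = formR G v q := fR_symm G hsym q v
  have h3 : formR G p w = formR G w p := fR_symm G hsym p w
  have h4 : formR G q w = formR G w q := fR_symm G hsym q w
  simp only [rot, fR_add_left, fR_add_right, fR_sub_left, fR_sub_right,
    fR_smul_left, fR_smul_right, hp, hq, hpq, hqp, h1, h2, h3, h4]
  ring_nf
  linear_combination (formR G v p * formR G w p + formR G v q * formR G w q) * hcs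

lemma rot_one (p q v : Fin b → ℝ) : rot G p q 1 0 v = v := by
  simp [rot]

lemma rot_fixed (p q v : Fin b → ℝ) (c s : ℝ) (hvp : formR G v p = 0)
    (hvq : formR G v q = 0) : rot G p q c s v = v := by
  simp [rot, hvp, hvq]

lemma rot_p (p q : Fin b → ℝ) (c s : ℝ) (hp : formR G p p = 1)
    (hpq : formR G p q = 0) : rot G p q c s p = c • p + s • q := by
  rw [rot, hp, hpq]
  funext i
  simp
  ring

lemma rot_cont (p q v : Fin b → ℝ) {X : Type*} [TopologicalSpace X]
    (c s : X → ℝ) (hc : Continuous c) (hs : Continuous s) :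
    Continuous (fun t => rot G p q (c t) (s t) v) := by
  simp only [rot]
  apply Continuous.add
  apply Continuous.add continuous_const
  · exact Continuous.smul (hc.sub continuous_const) continuous_const
  · exact Continuous.smul hs continuous_const

lemma circle_path (cs ss : ℝ) (hcs : cs ^ 2 + ss ^ 2 = 1) :
    ∃ c s : ℝ → ℝ, Continuous c ∧ Continuous s ∧
      (∀ t, c t ^ 2 + s t ^ 2 = 1) ∧ c 0 = 1 ∧ s 0 = 0 ∧ c 1 = cs ∧ s 1 = ss := by
  have hb : cs ^ 2 ≤ 1 := by nlinarith [sq_nonneg ss]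
  have hb' : -1 ≤ cs ∧ cs ≤ 1 := abs_le.mp (abs_le_one_iff_mul_self_le_one.mpr (by nlinarith))
  set σ : ℝ := if 0 ≤ ss then 1 else -1 with hσ
  refine ⟨fun t => Real.cos (t * Real.arccos cs),
    fun t => σ * Real.sin (t * Real.arccos cs), ?_, ?_, ?_, ?_, ?_, ?_, ?_⟩
  · exact Real.continuous_cos.comp (continuous_id.mul continuous_const)
  · exact continuous_const.mul
      (Real.continuous_sin.comp (continuous_id.mul continuous_const))
  · intro t
    have hσ2 : σ ^ 2 = 1 := by
      rcases le_or_gt 0 ss with h | h <;> simp [hσ, h, not_le.mpr] <;> norm_num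
    rw [mul_pow, hσ2, one_mul, add_comm]
    exact Real.sin_sq_add_cos_sq _
  · simp
  · simp
  · simp [Real.cos_arccos hb'.1 hb'.2]
  · have : Real.sin (Real.arccos cs) = Real.sqrt (1 - cs ^ 2) := Real.sin_arccos cs
    have h2 : Real.sqrt (1 - cs ^ 2) = |ss| := by
      rw [show 1 - cs ^ 2 = ss ^ 2 by linarith, Real.sqrt_sq_eq_abs]
    rcases le_or_gt 0 ss with h | h
    · simp [hσ, h, this, h2, abs_of_nonneg h]
    · simp [hσ, not_le.mpr h, this, h2, abs_of_neg h]

lemma rot_joined (hsym : G.IsSymm) (p q : Fin b → ℝ)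
    (hp : formR G p p = 1) (hq : formR G q q = 1) (hpq : formR G p q = 0)
    (cs ss : ℝ) (hcs : cs ^ 2 + ss ^ 2 = 1) (u v : Fin b → ℝ)
    (huv : (u, v) ∈ PSet G) :
    JoinedIn (PSet G) (u, v) (rot G p q cs ss u, rot G p q cs ss v) := by
  obtain ⟨c, s, hc, hs, hunit, hc0, hs0, hc1, hs1⟩ := circle_path cs ss hcs
  have hmem : ∀ t : ℝ, (rot G p q (c t) (s t) u, rot G p q (c t) (s t) v) ∈ PSet G := by
    intro t
    obtain ⟨h1, h2, h3⟩ := huv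
    refine ⟨?_, ?_, ?_⟩ <;>
      simp only [rot_form G hsym p q hp hq hpq (c t) (s t) (hunit t)]
    · exact h1
    · exact h2
    · exact h3
  refine ⟨⟨⟨fun t => (rot G p q (c t) (s t) u, rot G p q (c t) (s t) v), ?_⟩, ?_, ?_⟩, ?_⟩
  · exact Continuous.prodMk
      ((rot_cont G p q u _ _ hc hs).comp continuous_subtype_val)
      ((rot_cont G p q v _ _ hc hs).comp continuous_subtype_val)
  · simp only [Set.Icc.coe_zero, hc0, hs0, rot_one]
  · simp only [Set.Icc.coe_one, hc1, hs1]
  · intro t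
    exact hmem t

section Steps
variable (hsym : G.IsSymm) (F : Submodule ℝ (Fin b → ℝ))
  (hFpos : ∀ x ∈ F, x ≠ 0 → 0 < formR G x x)

lemma unit_norm {w : Fin b → ℝ} (hQ : 0 < formR G w w) :
    formR G ((Real.sqrt (formR G w w))⁻¹ • w) ((Real.sqrt (formR G w w))⁻¹ • w) = 1 := by
  rw [fR_smul_left, fR_smul_right]
  have hss : Real.sqrt (formR G w w) * Real.sqrt (formR G w w) = formR G w w :=
    Real.mul_self_sqrt (le_of_lt hQ)
  calc (Real.sqrt (formR G w w))⁻¹ * ((Real.sqrt (formR G w w))⁻¹ * formR G w w)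
      = formR G w w / (Real.sqrt (formR G w w) * Real.sqrt (formR G w w)) := by ring
    _ = formR G w w / formR G w w := by rw [hss]
    _ = 1 := div_self (ne_of_gt hQ)

lemma smul_unit_cancel {w : Fin b → ℝ} (hQ : 0 < formR G w w) :
    Real.sqrt (formR G w w) • ((Real.sqrt (formR G w w))⁻¹ • w) = w := by
  rw [smul_smul, mul_inv_cancel₀ (ne_of_gt (Real.sqrt_pos.mpr hQ)), one_smul]

include hFpos in
lemma third_vector (hF3 : Module.finrank ℝ F = 3) (e f : Fin b → ℝ) :
    ∃ r : Fin b → ℝ, r ∈ F ∧ formR G r r = 1 ∧ formR G r e = 0 ∧ formR G r f = 0 := by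
  let φ : F →ₗ[ℝ] ℝ × ℝ :=
    { toFun := fun x => (formR G x.1 e, formR G x.1 f)
      map_add' := fun x y => by
        simp [fR_add_left, Prod.ext_iff]
      map_smul' := fun c x => by
        simp [fR_smul_left, Prod.ext_iff] }
  have hnotinj : ¬ Function.Injective φ := by
    intro hinj
    have := LinearMap.finrank_le_finrank_of_injective hinj
    rw [hF3] at this
    have h2 : Module.finrank ℝ (ℝ × ℝ) = 2 := by simp
    omega
  rw [← LinearMap.ker_eq_bot] at hnotinj
  obtain ⟨x, hxker, hx0⟩ := (Submodule.ne_bot_iff _).mp hnotinj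
  have hker := LinearMap.mem_ker.mp hxker
  have hxe : formR G x.1 e = 0 := congrArg Prod.fst hker
  have hxf : formR G x.1 f = 0 := congrArg Prod.snd hker
  have hx0' : x.1 ≠ 0 := fun h => hx0 (Subtype.coe_injective h)
  have hQ : 0 < formR G x.1 x.1 := hFpos x.1 x.2 hx0'
  refine ⟨(Real.sqrt (formR G x.1 x.1))⁻¹ • x.1, Submodule.smul_mem F _ x.2,
    unit_norm G hQ, ?_, ?_⟩ <;> rw [fR_smul_left] <;> simp [hxe, hxf]

end Steps

lemma rot_q (p q : Fin b → ℝ) (c s : ℝ) (hq : formR G q q = 1)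
    (hqp : formR G q p = 0) : rot G p q c s q = c • q - s • p := by
  rw [rot, hq, hqp]
  funext i
  simp
  ring

lemma rot_mem {F : Submodule ℝ (Fin b → ℝ)} {p q v : Fin b → ℝ} (c s : ℝ)
    (hp : p ∈ F) (hq : q ∈ F) (hv : v ∈ F) : rot G p q c s v ∈ F := by
  rw [rot]
  exact add_mem (add_mem hv (Submodule.smul_mem _ _
      (add_mem (Submodule.smul_mem _ _ hp) (Submodule.smul_mem _ _ hq))))
    (Submodule.smul_mem _ _ (sub_mem (Submodule.smul_mem _ _ hq)
      (Submodule.smul_mem _ _ hp)))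

section Steps2
variable (hsym : G.IsSymm) {F : Submodule ℝ (Fin b → ℝ)}
  (hFpos : ∀ x ∈ F, x ≠ 0 → 0 < formR G x x)

include hsym hFpos in
lemma step_a {e f e' : Fin b → ℝ} (he : e ∈ F) (hf : f ∈ F) (he' : e' ∈ F)
    (hee : formR G e e = 1) (hff : formR G f f = 1) (hef : formR G e f = 0)
    (he'e' : formR G e' e' = 1) :
    ∃ f₂ : Fin b → ℝ, f₂ ∈ F ∧ formR G f₂ f₂ = 1 ∧ formR G e' f₂ = 0 ∧
      JoinedIn (PSet G) (e, f) (e', f₂) := by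
  have hmem : (e, f) ∈ PSet G := ⟨by rw [hee, hff], hef, by rw [hee]; norm_num⟩
  set κ := formR G e e' with hκ
  set w := e' - κ • e with hw
  have hwF : w ∈ F := Submodule.sub_mem F he' (Submodule.smul_mem F _ he)
  have hew : formR G e w = 0 := by
    rw [hw, fR_sub_right, fR_smul_right, hee]; ring
  have hQw : formR G w w = 1 - κ ^ 2 := by
    rw [hw, fR_sub_left, fR_sub_right, fR_sub_right, fR_smul_left, fR_smul_right,
      fR_smul_left, fR_smul_right, hee, he'e', fR_symm G hsym e' e, ← hκ]
    ring
  by_cases hw0 : w = 0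
  · have he'eq : e' = κ • e := sub_eq_zero.mp (hw ▸ hw0)
    have hκ2 : κ * κ = 1 := by
      have h := he'e'
      rw [he'eq, fR_smul_left, fR_smul_right, hee] at h
      linarith [h]
    have hcase : κ = 1 ∨ κ = -1 := by
      rcases mul_eq_zero.mp (show (κ - 1) * (κ + 1) = 0 by nlinarith) with h | h
      · left; linarith
      · right; linarith
    rcases hcase with h1 | h1
    · refine ⟨f, hf, hff, ?_, ?_⟩
      · rw [he'eq, h1, one_smul]; exact hef
      · have : e' = e := by rw [he'eq, h1, one_smul]
        rw [this]
        exact JoinedIn.refl hmem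
    · have he'neg : e' = -e := by rw [he'eq, h1, neg_one_smul]
      have hcs : (-1 : ℝ) ^ 2 + (0:ℝ) ^ 2 = 1 := by norm_num
      have hj := rot_joined G hsym e f hee hff hef (-1) 0 hcs e f hmem
      have h2 : rot G e f (-1) 0 e = e' := by
        rw [rot_p G e f (-1) 0 hee hef, he'neg]
        funext i; simp
      have h3 : rot G e f (-1) 0 f = -f := by
        rw [rot_q G e f (-1) 0 hff (by rw [fR_symm G hsym f e]; exact hef)]
        funext i; simp
      rw [h2, h3] at hj
      refine ⟨-f, Submodule.neg_mem F hf, ?_, ?_, hj⟩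
      · rw [show (-f : Fin b → ℝ) = (-1 : ℝ) • f by funext i; simp,
          fR_smul_left, fR_smul_right, hff]; ring
      · rw [show (-f : Fin b → ℝ) = (-1 : ℝ) • f by funext i; simp, fR_smul_right,
          he'neg, show (-e : Fin b → ℝ) = (-1 : ℝ) • e by funext i; simp,
          fR_smul_left, hef]
        ring
  · have hQpos : 0 < formR G w w := hFpos w hwF hw0
    set q : Fin b → ℝ := (Real.sqrt (formR G w w))⁻¹ • w with hqdef
    have hqq : formR G q q = 1 := unit_norm G hQpos
    have hqF : q ∈ F := Submodule.smul_mem F _ hwF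
    have heq : formR G e q = 0 := by
      rw [hqdef, fR_smul_right, hew]; ring
    set ss := Real.sqrt (formR G w w) with hss
    have hcs : κ ^ 2 + ss ^ 2 = 1 := by
      have : ss ^ 2 = formR G w w := Real.sq_sqrt (le_of_lt hQpos)
      rw [this, hQw]; ring
    have hj := rot_joined G hsym e q hee hqq heq κ ss hcs e f hmem
    have h2 : rot G e q κ ss e = e' := by
      rw [rot_p G e q κ ss hee heq, hss, hqdef, smul_unit_cancel G hQpos, hw]
      abel
    rw [h2] at hj
    refine ⟨rot G e q κ ss f, rot_mem G κ ss he hqF hf, ?_, ?_, hj⟩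
    · rw [rot_form G hsym e q hee hqq heq κ ss hcs f f, hff]
    · rw [← h2, rot_form G hsym e q hee hqq heq κ ss hcs e f, hef]

include hsym hFpos in
lemma step_b (hF3 : Module.finrank ℝ F = 3) {e' f₂ f' : Fin b → ℝ}
    (he' : e' ∈ F) (hf₂ : f₂ ∈ F) (hf' : f' ∈ F)
    (he'e' : formR G e' e' = 1) (hf₂f₂ : formR G f₂ f₂ = 1) (hf'f' : formR G f' f' = 1)
    (he'f₂ : formR G e' f₂ = 0) (he'f' : formR G e' f' = 0) :
    JoinedIn (PSet G) (e', f₂) (e', f') := by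
  have hmem : (e', f₂) ∈ PSet G := ⟨by rw [he'e', hf₂f₂], he'f₂, by rw [he'e']; norm_num⟩
  set κ := formR G f₂ f' with hκ
  set w := f' - κ • f₂ with hw
  have hwF : w ∈ F := Submodule.sub_mem F hf' (Submodule.smul_mem F _ hf₂)
  have hf₂w : formR G f₂ w = 0 := by
    rw [hw, fR_sub_right, fR_smul_right, hf₂f₂]; ring
  have he'w : formR G e' w = 0 := by
    rw [hw, fR_sub_right, fR_smul_right, he'f₂, he'f']; ring
  have hQw : formR G w w = 1 - κ ^ 2 := by
    rw [hw, fR_sub_left, fR_sub_right, fR_sub_right, fR_smul_left, fR_smul_right,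
      fR_smul_left, fR_smul_right, hf₂f₂, hf'f', fR_symm G hsym f' f₂, ← hκ]
    ring
  by_cases hw0 : w = 0
  · have hfeq : f' = κ • f₂ := sub_eq_zero.mp (hw ▸ hw0)
    have hκ2 : κ * κ = 1 := by
      have h := hf'f'
      rw [hfeq, fR_smul_left, fR_smul_right, hf₂f₂] at h
      linarith [h]
    have hcase : κ = 1 ∨ κ = -1 := by
      rcases mul_eq_zero.mp (show (κ - 1) * (κ + 1) = 0 by nlinarith) with h | h
      · left; linarith
      · right; linarith
    rcases hcase with h1 | h1
    · have : f' = f₂ := by rw [hfeq, h1, one_smul]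
      rw [this]
      exact JoinedIn.refl hmem
    · have hfneg : f' = -f₂ := by rw [hfeq, h1, neg_one_smul]
      obtain ⟨r, hrF, hrr, hre', hrf₂⟩ := third_vector G F hFpos hF3 e' f₂
      have hf₂r : formR G f₂ r = 0 := by rw [fR_symm G hsym f₂ r]; exact hrf₂
      have he'r : formR G e' r = 0 := by rw [fR_symm G hsym e' r]; exact hre'
      have hcs : (-1 : ℝ) ^ 2 + (0:ℝ) ^ 2 = 1 := by norm_num
      have hj := rot_joined G hsym f₂ r hf₂f₂ hrr hf₂r (-1) 0 hcs e' f₂ hmem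
      have h2 : rot G f₂ r (-1) 0 e' = e' := rot_fixed G f₂ r e' (-1) 0 he'f₂ he'r
      have h3 : rot G f₂ r (-1) 0 f₂ = f' := by
        rw [rot_p G f₂ r (-1) 0 hf₂f₂ hf₂r, hfneg]
        funext i; simp
      rw [h2, h3] at hj
      exact hj
  · have hQpos : 0 < formR G w w := hFpos w hwF hw0
    set q : Fin b → ℝ := (Real.sqrt (formR G w w))⁻¹ • w with hqdef
    have hqq : formR G q q = 1 := unit_norm G hQpos
    have hf₂q : formR G f₂ q = 0 := by rw [hqdef, fR_smul_right, hf₂w]; ring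
    have he'q : formR G e' q = 0 := by rw [hqdef, fR_smul_right, he'w]; ring
    set ss := Real.sqrt (formR G w w) with hss
    have hcs : κ ^ 2 + ss ^ 2 = 1 := by
      have : ss ^ 2 = formR G w w := Real.sq_sqrt (le_of_lt hQpos)
      rw [this, hQw]; ring
    have hj := rot_joined G hsym f₂ q hf₂f₂ hqq hf₂q κ ss hcs e' f₂ hmem
    have h2 : rot G f₂ q κ ss e' = e' := rot_fixed G f₂ q e' κ ss he'f₂ he'q
    have h3 : rot G f₂ q κ ss f₂ = f' := by
      rw [rot_p G f₂ q κ ss hf₂f₂ hf₂q, hss, hqdef, smul_unit_cancel G hQpos, hw]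
      abel
    rw [h2, h3] at hj
    exact hj

include hsym hFpos in
lemma step2 (hF3 : Module.finrank ℝ F = 3) {e f e' f' : Fin b → ℝ}
    (he : e ∈ F) (hf : f ∈ F) (he' : e' ∈ F) (hf' : f' ∈ F)
    (hee : formR G e e = 1) (hff : formR G f f = 1) (hef : formR G e f = 0)
    (he'e' : formR G e' e' = 1) (hf'f' : formR G f' f' = 1) (he'f' : formR G e' f' = 0) :
    JoinedIn (PSet G) (e, f) (e', f') := by
  obtain ⟨f₂, hf₂F, hf₂f₂, he'f₂, hj1⟩ :=
    step_a G hsym hFpos he hf he' hee hff hef he'e'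
  exact hj1.trans (step_b G hsym hFpos hF3 he' hf₂F hf' he'e' hf₂f₂ hf'f' he'f₂ he'f')

end Steps2

section Neg
variable (hsym : G.IsSymm) (F : Submodule ℝ (Fin b → ℝ))

lemma fR_expand (hsym : G.IsSymm) (x y : Fin b → ℝ) (t : ℝ) :
    formR G (x + t • y) (x + t • y) =
      formR G x x + 2 * t * formR G x y + t ^ 2 * formR G y y := by
  rw [fR_add_left, fR_add_right, fR_add_right, fR_smul_left, fR_smul_right,
    fR_smul_left, fR_smul_right, fR_symm G hsym y x]
  ring

include hsym in
lemma W_neg (hF3 : Module.finrank ℝ F = 3)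
    (hFpos : ∀ x ∈ F, x ≠ 0 → 0 < formR G x x)
    (hmax : ∀ F' : Submodule ℝ (Fin b → ℝ),
      (∀ x ∈ F', x ≠ 0 → 0 < formR G x x) → Module.finrank ℝ F' ≤ 3)
    (x : Fin b → ℝ) (hx : ∀ f ∈ F, formR G x f = 0) : formR G x x ≤ 0 := by
  by_contra hpos
  push_neg at hpos
  have hx0 : x ≠ 0 := by
    intro h
    rw [h, fR_zero_left] at hpos
    exact lt_irrefl 0 hpos
  have hxF : x ∉ F := by
    intro hmem
    have := hx x hmem
    rw [this] at hpos
    exact lt_irrefl 0 hpos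
  set F' := F ⊔ Submodule.span ℝ {x} with hF'
  have hpos' : ∀ y ∈ F', y ≠ 0 → 0 < formR G y y := by
    intro y hy hy0
    obtain ⟨f, hfF, z, hz, hyz⟩ := Submodule.mem_sup.mp hy
    obtain ⟨c, hc⟩ := Submodule.mem_span_singleton.mp hz
    have hyeq : y = f + c • x := by rw [← hyz, ← hc]
    have hQy : formR G y y = formR G f f + c ^ 2 * formR G x x := by
      rw [hyeq, fR_expand G hsym f x c, fR_symm G hsym f x, hx f hfF]
      ring
    rcases eq_or_ne f 0 with hf0 | hf0
    · have hc0 : c ≠ 0 := by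
        intro h
        apply hy0
        rw [hyeq, hf0, h, zero_smul, add_zero]
      rw [hQy, hf0, fR_zero_left]
      have : 0 < c ^ 2 := by positivity
      nlinarith
    · have hf := hFpos f hfF hf0
      rw [hQy]
      nlinarith [sq_nonneg c, mul_nonneg (sq_nonneg c) (le_of_lt hpos)]
  have hlt : Module.finrank ℝ F' = 4 := by
    have hinf : F ⊓ Submodule.span ℝ {x} = ⊥ := by
      rw [Submodule.eq_bot_iff]
      intro y ⟨hyF, hyS⟩
      obtain ⟨c, hc⟩ := Submodule.mem_span_singleton.mp hyS
      rcases eq_or_ne c 0 with h | h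
      · rw [← hc, h, zero_smul]
      · exfalso
        apply hxF
        have : c⁻¹ • y ∈ F := Submodule.smul_mem F _ hyF
        rwa [← hc, smul_smul, inv_mul_cancel₀ h, one_smul] at this
    have := Submodule.finrank_sup_add_finrank_inf_eq F (Submodule.span ℝ {x})
    rw [hinf, hF3, finrank_span_singleton hx0] at this
    simpa using this
  have := hmax F' hpos'
  omega

include hsym in
lemma W_cs (hW : ∀ z, (∀ f ∈ F, formR G z f = 0) → formR G z z ≤ 0)
    {x y : Fin b → ℝ} (hx : ∀ f ∈ F, formR G x f = 0) (hy : ∀ f ∈ F, formR G y f = 0) :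
    formR G x y ^ 2 ≤ formR G x x * formR G y y := by
  have hsum : ∀ t : ℝ, formR G (x + t • y) (x + t • y) ≤ 0 := by
    intro t
    apply hW
    intro f hf
    rw [fR_add_left, fR_smul_left, hx f hf, hy f hf]
    ring
  have hQx : formR G x x ≤ 0 := hW x hx
  have hQy : formR G y y ≤ 0 := hW y hy
  set β := formR G x y with hβ
  rcases eq_or_lt_of_le hQy with h0 | hneg
  · have hβ0 : β = 0 := by
      by_contra hβne
      have key := hsum ((1 - formR G x x) / (2 * β))
      rw [fR_expand G hsym x y] at key
      have heq : formR G x x + 2 * ((1 - formR G x x) / (2 * β)) * formR G x y +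
          ((1 - formR G x x) / (2 * β)) ^ 2 * formR G y y = 1 := by
        rw [h0]
        field_simp
        rw [← hβ]
        ring
      rw [heq] at key
      linarith
    rw [hβ0, ← h0]
    nlinarith
  · have key := hsum (-β / formR G y y)
    rw [fR_expand G hsym x y] at key
    have hyne : formR G y y ≠ 0 := ne_of_lt hneg
    have h3 : 0 ≤ (formR G x x + 2 * (-β / formR G y y) * formR G x y +
        (-β / formR G y y) ^ 2 * formR G y y) * formR G y y := by
      have := mul_nonneg (neg_nonneg.mpr key) (neg_nonneg.mpr (le_of_lt hneg))
      rwa [neg_mul_neg] at this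
    have h4 : (formR G x x + 2 * (-β / formR G y y) * formR G x y +
        (-β / formR G y y) ^ 2 * formR G y y) * formR G y y =
        formR G x x * formR G y y - β ^ 2 := by
      rw [← hβ]
      field_simp
      ring
    rw [h4] at h3
    linarith

end Neg

lemma fR_sum_right' {ι : Type*} (s : Finset ι) (x : Fin b → ℝ) (cf : ι → ℝ)
    (w : ι → Fin b → ℝ) :
    formR G x (∑ i ∈ s, cf i • w i) = ∑ i ∈ s, cf i * formR G x (w i) := by
  classical
  induction s using Finset.induction_on with
  | empty => simp [fR_zero_right]
  | insert _ _ hni ih =>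
    rw [Finset.sum_insert hni, Finset.sum_insert hni, fR_add_right, fR_smul_right, ih]

lemma fR_sum_left' {ι : Type*} (s : Finset ι) (x : Fin b → ℝ) (cf : ι → ℝ)
    (w : ι → Fin b → ℝ) :
    formR G (∑ i ∈ s, cf i • w i) x = ∑ i ∈ s, cf i * formR G (w i) x := by
  classical
  induction s using Finset.induction_on with
  | empty => simp [fR_zero_left]
  | insert _ _ hni ih =>
    rw [Finset.sum_insert hni, Finset.sum_insert hni, fR_add_left, fR_smul_left, ih]

lemma norm_join {u v : Fin b → ℝ} (h : (u, v) ∈ PSet G) :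
    JoinedIn (PSet G) (u, v)
      ((Real.sqrt (formR G u u))⁻¹ • u, (Real.sqrt (formR G u u))⁻¹ • v) := by
  obtain ⟨h1', h2', h3'⟩ := h
  have h1 : formR G u u = formR G v v := h1'
  have h2 : formR G u v = 0 := h2'
  have h3 : 0 < formR G u u := h3'
  set ρ := (Real.sqrt (formR G u u))⁻¹ with hρ
  have hρpos : 0 < ρ := by
    rw [hρ]
    exact inv_pos.mpr (Real.sqrt_pos.mpr h3)
  have hk : ∀ t : ℝ, 0 ≤ t → t ≤ 1 → 0 < 1 - t + t * ρ := by
    intro t ht0 ht1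
    rcases lt_or_ge t 1 with hlt | hge
    · nlinarith [mul_nonneg ht0 hρpos.le]
    · have ht : t = 1 := le_antisymm ht1 hge
      rw [ht]; linarith
  have hmem : ∀ k : ℝ, 0 < k → ((k • u, k • v) : _ × _) ∈ PSet G := by
    intro k hkpos
    refine ⟨?_, ?_, ?_⟩ <;> simp only [fR_smul_left, fR_smul_right]
    · rw [h1]
    · rw [h2]; ring
    · nlinarith [mul_pos hkpos (mul_pos hkpos h3)]
  refine ⟨⟨⟨fun t => ((1 - t.1 + t.1 * ρ) • u, (1 - t.1 + t.1 * ρ) • v), ?_⟩, ?_, ?_⟩, ?_⟩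
  · apply Continuous.prodMk <;>
    · apply Continuous.fun_smul _ continuous_const
      have : Continuous (fun t : ℝ => 1 - t + t * ρ) := by continuity
      exact this.comp continuous_subtype_val
  · simp
  · simp
  · intro t
    exact hmem _ (hk t.1 t.2.1 t.2.2)

section Step1
variable (hsym : G.IsSymm) {F : Submodule ℝ (Fin b → ℝ)}
  (hFpos : ∀ x ∈ F, x ≠ 0 → 0 < formR G x x)
  (hW : ∀ z, (∀ f ∈ F, formR G z f = 0) → formR G z z ≤ 0)
  (g : Fin 3 → (Fin b → ℝ)) (hgF : ∀ i, g i ∈ F)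
  (hgo : ∀ i j, formR G (g i) (g j) = if i = j then 1 else 0)
  (hgspan : ∀ f ∈ F, f = ∑ i, formR G f (g i) • g i)

set_option maxHeartbeats 1000000 in
include hsym hFpos hW hgF hgo hgspan in
lemma step1 {u v : Fin b → ℝ} (h : (u, v) ∈ PSet G) (hQu : formR G u u = 1) :
    ∃ e f : Fin b → ℝ, e ∈ F ∧ f ∈ F ∧ formR G e e = 1 ∧ formR G f f = 1 ∧
      formR G e f = 0 ∧ JoinedIn (PSet G) (u, v) (e, f) := by
  classical
  obtain ⟨hEq, hBuv, hPos⟩ := h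
  have hQv : formR G v v = 1 := by rw [← hEq]; exact hQu
  set a := ∑ i, formR G u (g i) • g i with hadef
  set c := ∑ i, formR G v (g i) • g i with hcdef
  have haF : a ∈ F := Submodule.sum_mem F (fun i _ => Submodule.smul_mem F _ (hgF i))
  have hcF : c ∈ F := Submodule.sum_mem F (fun i _ => Submodule.smul_mem F _ (hgF i))
  set x := u - a with hxdef
  set y := v - c with hydef
  -- perpendicularity of x, y to F
  have hxg : ∀ i, formR G x (g i) = 0 := by
    intro i
    rw [hxdef, fR_sub_left, hadef, fR_sum_left']
    have heach : ∀ j, formR G u (g j) * formR G (g j) (g i) =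
        if j = i then formR G u (g i) else 0 := by
      intro j
      rw [hgo j i]
      by_cases hji : j = i <;> simp [hji]
    rw [Finset.sum_congr rfl (fun j _ => heach j), Finset.sum_ite_eq' Finset.univ i
      (fun _ => formR G u (g i))]
    simp
  have hyg : ∀ i, formR G y (g i) = 0 := by
    intro i
    rw [hydef, fR_sub_left, hcdef, fR_sum_left']
    have heach : ∀ j, formR G v (g j) * formR G (g j) (g i) =
        if j = i then formR G v (g i) else 0 := by
      intro j
      rw [hgo j i]
      by_cases hji : j = i <;> simp [hji]
    rw [Finset.sum_congr rfl (fun j _ => heach j), Finset.sum_ite_eq' Finset.univ i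
      (fun _ => formR G v (g i))]
    simp
  have hxPerp : ∀ f ∈ F, formR G x f = 0 := by
    intro f hf
    rw [hgspan f hf, fR_sum_right']
    refine Finset.sum_eq_zero (fun i _ => ?_)
    rw [hxg i]; ring
  have hyPerp : ∀ f ∈ F, formR G y f = 0 := by
    intro f hf
    rw [hgspan f hf, fR_sum_right']
    refine Finset.sum_eq_zero (fun i _ => ?_)
    rw [hyg i]; ring
  set A := formR G x x with hA
  set Cy := formR G y y with hCy
  set Bb := formR G x y with hBb
  have hQx : A ≤ 0 := hW x hxPerp
  have hQy : Cy ≤ 0 := hW y hyPerp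
  have hcs : Bb ^ 2 ≤ A * Cy := W_cs G hsym F hW hxPerp hyPerp
  have hax : formR G a x = 0 := by rw [fR_symm G hsym a x]; exact hxPerp a haF
  have hay : formR G a y = 0 := by rw [fR_symm G hsym a y]; exact hyPerp a haF
  have hcy : formR G c y = 0 := by rw [fR_symm G hsym c y]; exact hyPerp c hcF
  have hu_eq : u = a + x := by rw [hxdef]; abel
  have hv_eq : v = c + y := by rw [hydef]; abel
  have hQa : formR G a a = 1 - A := by
    have h1 : formR G u u = formR G a a + 2 * formR G a x + A := by
      rw [hu_eq, fR_add_left, fR_add_right, fR_add_right, fR_symm G hsym x a, hA]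
      ring
    rw [hQu, hax] at h1
    linarith
  have hQc : formR G c c = 1 - Cy := by
    have h1 : formR G v v = formR G c c + 2 * formR G c y + Cy := by
      rw [hv_eq, fR_add_left, fR_add_right, fR_add_right, fR_symm G hsym y c, hCy]
      ring
    rw [hQv, hcy] at h1
    linarith
  have hac : formR G a c = -Bb := by
    have h1 : formR G u v = formR G a c + formR G a y + formR G x c + Bb := by
      rw [hu_eq, hv_eq, fR_add_left, fR_add_right, fR_add_right, hBb]
      ring
    rw [hBuv, hay, hxPerp c hcF] at h1
    linarith
  have hQa_pos : 0 < formR G a a := by rw [hQa]; linarith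
  -- the path coefficient functions
  set p : ℝ → ℝ := fun s => Real.sqrt (1 - s ^ 2 * A) with hpdef
  set m : ℝ → ℝ := fun s => -(s ^ 2 * Bb) / p s with hmdef
  set r : ℝ → ℝ := fun s => Real.sqrt (1 - s ^ 2 * Cy - (m s) ^ 2) with hrdef
  have hargp : ∀ s : ℝ, 1 ≤ 1 - s ^ 2 * A := by
    intro s
    have e1 := mul_nonpos_of_nonneg_of_nonpos (sq_nonneg s) hQx
    linarith
  have hp2 : ∀ s, p s ^ 2 = 1 - s ^ 2 * A := by
    intro s
    exact Real.sq_sqrt (by linarith [hargp s])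
  have hp1le : ∀ s, 1 ≤ p s := by
    intro s
    have := Real.sqrt_le_sqrt (hargp s)
    rwa [Real.sqrt_one] at this
  have hppos : ∀ s, 0 < p s := fun s => lt_of_lt_of_le one_pos (hp1le s)
  have hpne : ∀ s, p s ≠ 0 := fun s => ne_of_gt (hppos s)
  have hm2 : ∀ s, m s ^ 2 * p s ^ 2 = (s ^ 2 * Bb) ^ 2 := by
    intro s
    have hne := hpne s
    rw [hmdef]
    field_simp
  have hD : ∀ s : ℝ, 1 ≤ (1 - s ^ 2 * A) * (1 - s ^ 2 * Cy) - (s ^ 2) ^ 2 * Bb ^ 2 := by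
    intro s
    have h4 : (s ^ 2) ^ 2 * Bb ^ 2 ≤ (s ^ 2) ^ 2 * (A * Cy) :=
      mul_le_mul_of_nonneg_left hcs (by positivity)
    have e1 := mul_nonpos_of_nonneg_of_nonpos (sq_nonneg s) hQx
    have e2 := mul_nonpos_of_nonneg_of_nonpos (sq_nonneg s) hQy
    nlinarith [h4, e1, e2]
  have hargr : ∀ s : ℝ, 0 < 1 - s ^ 2 * Cy - m s ^ 2 := by
    intro s
    have hsub : (1 - s ^ 2 * Cy - m s ^ 2) * p s ^ 2 =
        (1 - s ^ 2 * A) * (1 - s ^ 2 * Cy) - (s ^ 2) ^ 2 * Bb ^ 2 := by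
      linear_combination (1 - s ^ 2 * Cy) * hp2 s - hm2 s
    by_contra hX
    push_neg at hX
    have hnn := mul_nonneg (neg_nonneg.mpr hX) (sq_nonneg (p s))
    have hD' := hD s
    linarith [hsub, hnn, hD']
  have hr2 : ∀ s, r s ^ 2 = 1 - s ^ 2 * Cy - m s ^ 2 := by
    intro s
    exact Real.sq_sqrt (le_of_lt (hargr s))
  have hrpos : ∀ s, 0 < r s := fun s => Real.sqrt_pos.mpr (hargr s)
  have hrne : r 1 ≠ 0 := ne_of_gt (hrpos 1)
  -- e
  set sqa := Real.sqrt (formR G a a) with hsqadef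
  have hsqa_pos : 0 < sqa := Real.sqrt_pos.mpr hQa_pos
  set e := sqa⁻¹ • a with hedef
  have heF : e ∈ F := Submodule.smul_mem F _ haF
  have hee : formR G e e = 1 := unit_norm G hQa_pos
  have hp1 : p 1 = sqa := by
    rw [hpdef, hsqadef, hQa]
    norm_num
  have hex : formR G e x = 0 := by rw [fR_symm G hsym e x]; exact hxPerp e heF
  have hey : formR G e y = 0 := by rw [fR_symm G hsym e y]; exact hyPerp e heF
  have hec : formR G e c = m 1 := by
    rw [hedef, fR_smul_left, hac]
    show sqa⁻¹ * -Bb = -((1:ℝ) ^ 2 * Bb) / p 1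
    rw [hp1, one_pow]
    field_simp
  have hsqae : sqa • e = a := by
    rw [hedef, smul_smul, mul_inv_cancel₀ (ne_of_gt hsqa_pos), one_smul]
  clear_value e
  -- c'
  set c' := c - m 1 • e with hc'def
  have hc'F : c' ∈ F := Submodule.sub_mem F hcF (Submodule.smul_mem F _ heF)
  have hec' : formR G e c' = 0 := by
    rw [hc'def, fR_sub_right, fR_smul_right, hec, hee]
    ring
  have hce : formR G c e = m 1 := by rw [fR_symm G hsym c e]; exact hec
  have hQc' : formR G c' c' = r 1 ^ 2 := by
    rw [hc'def, fR_sub_left, fR_sub_right, fR_sub_right, fR_smul_left, fR_smul_right,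
      fR_smul_left, fR_smul_right, hee, hce, hec, hQc, hr2 1]
    ring
  have hQc'_pos : 0 < formR G c' c' := by
    rw [hQc']
    exact pow_pos (hrpos 1) 2
  clear_value c'
  -- f
  set f := (r 1)⁻¹ • c' with hfdef
  have hfF : f ∈ F := Submodule.smul_mem F _ hc'F
  have hff : formR G f f = 1 := by
    have := hrne
    rw [hfdef, fR_smul_left, fR_smul_right, hQc', pow_two]
    field_simp
  have hef : formR G e f = 0 := by
    rw [hfdef, fR_smul_right, hec', mul_zero]
  have hrf : r 1 • f = c' := by
    rw [hfdef, smul_smul, mul_inv_cancel₀ hrne, one_smul]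
  clear_value f
  have hfx : formR G f x = 0 := by rw [fR_symm G hsym f x]; exact hxPerp f hfF
  have hfy : formR G f y = 0 := by rw [fR_symm G hsym f y]; exact hyPerp f hfF
  have hxe : formR G x e = 0 := hxPerp e heF
  have hxf : formR G x f = 0 := hxPerp f hfF
  have hye : formR G y e = 0 := hyPerp e heF
  have hyf : formR G y f = 0 := hyPerp f hfF
  have hfe : formR G f e = 0 := by rw [fR_symm G hsym f e]; exact hef
  -- path
  set γu : ℝ → (Fin b → ℝ) := fun s => p s • e + s • x with hγu
  set γv : ℝ → (Fin b → ℝ) := fun s => m s • e + r s • f + s • y with hγv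
  have hmem : ∀ s : ℝ, (γu s, γv s) ∈ PSet G := by
    intro s
    have hQus : formR G (γu s) (γu s) = 1 := by
      simp only [hγu, fR_add_left, fR_add_right, fR_smul_left, fR_smul_right,
        hee, hex, hxe, ← hA]
      linear_combination hp2 s
    have hQvs : formR G (γv s) (γv s) = 1 := by
      simp only [hγv, fR_add_left, fR_add_right, fR_smul_left, fR_smul_right,
        hee, hef, hfe, hff, hey, hye, hfy, hyf, ← hCy]
      linear_combination hr2 s
    have hBs : formR G (γu s) (γv s) = 0 := by
      have hne := hpne s
      have hpm : p s * m s = -(s ^ 2 * Bb) := by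
        rw [hmdef]
        field_simp
      simp only [hγu, hγv, fR_add_left, fR_add_right, fR_smul_left, fR_smul_right,
        hee, hef, hex, hey, hxe, hxf, ← hBb]
      linear_combination hpm
    exact ⟨by rw [hQus, hQvs], hBs, by rw [hQus]; norm_num⟩
  have hstart_u : γu 1 = u := by
    show p 1 • e + (1 : ℝ) • x = u
    rw [hp1, hsqae, one_smul, hu_eq]
  have hstart_v : γv 1 = v := by
    show m 1 • e + r 1 • f + (1 : ℝ) • y = v
    rw [hrf, one_smul, hc'def, hv_eq]
    abel
  have hend_u : γu 0 = e := by
    show p 0 • e + (0 : ℝ) • x = e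
    have hp0 : p 0 = 1 := by simp only [hpdef]; norm_num
    rw [hp0, one_smul, zero_smul, add_zero]
  have hend_v : γv 0 = f := by
    show m 0 • e + r 0 • f + (0 : ℝ) • y = f
    have hm0 : m 0 = 0 := by simp only [hmdef]; norm_num
    have hr0 : r 0 = 1 := by
      simp only [hrdef]
      rw [hm0]
      norm_num
    rw [hm0, hr0, one_smul, zero_smul, zero_smul, zero_add, add_zero]
  -- continuity
  have hcp : Continuous p := by
    rw [hpdef]
    exact Real.continuous_sqrt.comp
      (continuous_const.sub ((continuous_pow 2).mul continuous_const))
  have hcm : Continuous m := by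
    rw [hmdef]
    exact Continuous.div
      (((continuous_pow 2).mul continuous_const).neg) hcp hpne
  have hcr : Continuous r := by
    rw [hrdef]
    apply Real.continuous_sqrt.comp
    exact ((continuous_const.sub (continuous_pow 2 |>.mul continuous_const)).sub
      (hcm.pow 2))
  have hcγu : Continuous γu := by
    rw [hγu]
    exact (hcp.smul continuous_const).add (continuous_id.smul continuous_const)
  have hcγv : Continuous γv := by
    rw [hγv]
    exact ((hcm.smul continuous_const).add (hcr.smul continuous_const)).add
      (continuous_id.smul continuous_const)
  refine ⟨e, f, heF, hfF, hee, hff, hef, ?_⟩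
  refine ⟨⟨⟨fun t => (γu (1 - t.1), γv (1 - t.1)), ?_⟩, ?_, ?_⟩, ?_⟩
  · have hc1 : Continuous (fun t : unitInterval => 1 - t.1) :=
      continuous_const.sub continuous_subtype_val
    exact (hcγu.comp hc1).prodMk (hcγv.comp hc1)
  · simp only [Set.Icc.coe_zero, sub_zero, hstart_u, hstart_v]
  · simp only [Set.Icc.coe_one, sub_self, hend_u, hend_v]
  · intro t
    exact hmem (1 - t.1)

end Step1

lemma pset_isPathConnected (hsym : G.IsSymm) (F : Submodule ℝ (Fin b → ℝ))
    (hF3 : Module.finrank ℝ F = 3)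
    (hFpos : ∀ x ∈ F, x ≠ 0 → 0 < formR G x x)
    (hmax : ∀ F' : Submodule ℝ (Fin b → ℝ),
      (∀ x ∈ F', x ≠ 0 → 0 < formR G x x) → Module.finrank ℝ F' ≤ 3) :
    IsPathConnected (PSet G) := by
  obtain ⟨g, hgF, hgo, hgspan⟩ := exists_triple G hsym F hF3 hFpos
  have hW : ∀ z, (∀ f ∈ F, formR G z f = 0) → formR G z z ≤ 0 :=
    fun z hz => W_neg G hsym F hF3 hFpos hmax z hz
  have hg00 : formR G (g 0) (g 0) = 1 := by rw [hgo 0 0]; simp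
  have hg11 : formR G (g 1) (g 1) = 1 := by rw [hgo 1 1]; simp
  have hg01 : formR G (g 0) (g 1) = 0 := by rw [hgo 0 1]; simp
  have hbase : ((g 0, g 1) : _ × _) ∈ PSet G :=
    ⟨by rw [hg00, hg11], hg01, by rw [hg00]; norm_num⟩
  refine ⟨(g 0, g 1), hbase, ?_⟩
  rintro ⟨u, v⟩ hp
  have j1 := norm_join G hp
  have hmem1 := j1.target_mem
  have hQu1 : formR G ((Real.sqrt (formR G u u))⁻¹ • u) ((Real.sqrt (formR G u u))⁻¹ • u)
      = 1 := unit_norm G hp.2.2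
  obtain ⟨e, f, heF, hfF, hee, hff, hef, j2⟩ :=
    step1 G hsym hFpos hW g hgF hgo hgspan hmem1 hQu1
  have j3 := step2 G hsym hFpos hF3 heF hfF (hgF 0) (hgF 1) hee hff hef hg00 hg11 hg01
  exact ((j1.trans j2).trans j3).symm

end PD

namespace PD
variable {b : ℕ} (G : Matrix (Fin b) (Fin b) ℝ)

lemma mk_congr {z w : Fin b → ℂ} (hz : z ≠ 0) (hw : w ≠ 0) (h : z = w) :
    Projectivization.mk ℂ z hz = Projectivization.mk ℂ w hw := by
  subst h
  rfl

end PD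

/-- For a nondegenerate symmetric bilinear form of signature `(3, b−3)` on a real vector
space `V` of dimension `b > 3`, the period domain `Q ⊂ ℙ(V_ℂ)` is connected. -/
theorem stmt5 (b : ℕ) (hb : 3 < b) (G : Matrix (Fin b) (Fin b) ℝ)
    (hsymm : G.IsSymm) (hdet : G.det ≠ 0)
    (hsig : ∃ F : Submodule ℝ (Fin b → ℝ), Module.finrank ℝ F = 3 ∧
      ∀ x ∈ F, x ≠ 0 → 0 < formR G x x)
    (hmax : ∀ F : Submodule ℝ (Fin b → ℝ),
      (∀ x ∈ F, x ≠ 0 → 0 < formR G x x) → Module.finrank ℝ F ≤ 3) :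
    IsConnected (periodDomain G) := by
  classical
  obtain ⟨F, hF3, hFpos⟩ := hsig
  have hpc : IsPathConnected (PD.PSet G) :=
    PD.pset_isPathConnected G hsymm F hF3 hFpos hmax
  -- the map from pairs to complex vectors
  set φ : ((Fin b → ℝ) × (Fin b → ℝ)) → (Fin b → ℂ) :=
    fun p => PD.cx p.1 + Complex.I • PD.cx p.2 with hφdef
  have hne : ∀ p ∈ PD.PSet G, φ p ≠ 0 := by
    intro p hp h0
    have h1 : p.1 = 0 := by
      funext i
      have h2 := congrArg Complex.re (congrFun h0 i)
      simpa [hφdef, PD.cx] using h2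
    have h3 := hp.2.2
    rw [h1, PD.fR_zero_left] at h3
    exact lt_irrefl 0 h3
  have hφre : ∀ p : (Fin b → ℝ) × (Fin b → ℝ),
      ((fun i => ((φ p) i).re), (fun i => ((φ p) i).im)) = p := by
    intro p
    refine Prod.ext ?_ ?_ <;> funext i <;> simp [hφdef, PD.cx]
  -- the map into the projectivization
  set Φ : ↥(PD.PSet G) → ℙ ℂ (Fin b → ℂ) :=
    fun q => Projectivization.mk ℂ (φ q.1) (hne q.1 q.2) with hΦdef
  have hφcont : Continuous (fun q : ↥(PD.PSet G) => φ q.1) := by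
    apply continuous_pi
    intro i
    show Continuous fun q : ↥(PD.PSet G) =>
      ((q.1.1 i : ℂ) + Complex.I * (q.1.2 i : ℂ))
    exact (Complex.continuous_ofReal.comp ((continuous_apply i).comp
        (continuous_fst.comp continuous_subtype_val))).add
      (continuous_const.mul (Complex.continuous_ofReal.comp ((continuous_apply i).comp
        (continuous_snd.comp continuous_subtype_val))))
  have hΦcont : Continuous Φ := by
    have hg : Continuous (fun q : ↥(PD.PSet G) =>
        (⟨φ q.1, hne q.1 q.2⟩ : {w : Fin b → ℂ // w ≠ 0})) :=
      Continuous.subtype_mk hφcont _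
    exact continuous_quotient_mk'.comp hg
  have hrange : periodDomain G = Set.range Φ := by
    ext P
    constructor
    · rintro ⟨z, hz, rfl, hA, hB⟩
      have hmemP : ((fun i => (z i).re), (fun i => (z i).im)) ∈ PD.PSet G :=
        (PD.key_iff G hsymm z).mp ⟨hA, hB⟩
      refine ⟨⟨_, hmemP⟩, ?_⟩
      exact PD.mk_congr _ hz (PD.cx_decomp z).symm
    · rintro ⟨q, rfl⟩
      refine ⟨φ q.1, hne q.1 q.2, rfl, ?_, ?_⟩
      · exact ((PD.key_iff G hsymm (φ q.1)).mpr (by rw [hφre q.1]; exact q.2)).1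
      · exact ((PD.key_iff G hsymm (φ q.1)).mpr (by rw [hφre q.1]; exact q.2)).2
  rw [hrange]
  haveI : ConnectedSpace ↥(PD.PSet G) :=
    isConnected_iff_connectedSpace.mp hpc.isConnected
  exact isConnected_range hΦcont
end

section
/- Let V be a finite-dimensional real vector space with a nondegenerate symmetric bilinear form of signature (3, b−3) with b = dim V ≥ 4. Then for every nonzero α ∈ V there exists x ∈ V_ℂ with ⟨x,x⟩ = 0, ⟨x + x̄, x + x̄⟩ > 0 and ⟨x, α⟩ = 0; equivalently, the hyperplane α^⊥ meets the period domain Q. -/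
/-- Let `V` be a finite-dimensional real vector space with a nondegenerate symmetric
bilinear form of signature `(3, b−3)`, `b = dim V ≥ 4`.  Representing `x ∈ V_ℂ` by its real
and imaginary parts `(xr, xi)`, the conditions `⟨x,x⟩ = 0`, `⟨x + x̄, x + x̄⟩ > 0` and
`⟨x, α⟩ = 0` read, respectively: `b xr xr = b xi xi ∧ b xr xi = 0`, `0 < b xr xr`, and
`b xr α = 0 ∧ b xi α = 0`.  For every nonzero `α ∈ V` such an `x` exists; equivalently, the
hyperplane `α^⊥` meets the period domain `Q`. -/
theorem stmt7 {V : Type*} [AddCommGroup V] [Module ℝ V] [FiniteDimensional ℝ V]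
    (b : LinearMap.BilinForm ℝ V) (hsymm : ∀ x y, b x y = b y x)
    (hdim : 4 ≤ Module.finrank ℝ V)
    (hnd : ∀ x : V, (∀ y, b x y = 0) → x = 0)
    (hsig : ∃ F : Submodule ℝ V, Module.finrank ℝ F = 3 ∧ ∀ x ∈ F, x ≠ 0 → 0 < b x x)
    (hmax : ∀ F : Submodule ℝ V, (∀ x ∈ F, x ≠ 0 → 0 < b x x) → Module.finrank ℝ F ≤ 3)
    (α : V) (hα : α ≠ 0) :
    ∃ xr xi : V, b xr xr = b xi xi ∧ b xr xi = 0 ∧ 0 < b xr xr ∧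
      b xr α = 0 ∧ b xi α = 0 := by
  obtain ⟨F, hF3, hFpos⟩ := hsig
  -- the hyperplane α^⊥
  set W : Submodule ℝ V := LinearMap.ker (b α) with hW
  have hWdim : Module.finrank ℝ V - 1 ≤ Module.finrank ℝ W := by
    have h := LinearMap.finrank_range_add_finrank_ker (b α)
    rw [← hW] at h
    have hr : Module.finrank ℝ (LinearMap.range (b α)) ≤ 1 := by
      simpa using Submodule.finrank_le (LinearMap.range (b α))
    omega
  -- the intersection F ⊓ W has dimension ≥ 2
  have hsup : Module.finrank ℝ ↥(F ⊔ W) ≤ Module.finrank ℝ V :=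
    Submodule.finrank_le _
  have hinf : 2 ≤ Module.finrank ℝ ↥(F ⊓ W) := by
    have h := Submodule.finrank_sup_add_finrank_inf_eq F W
    omega
  set P := F ⊓ W with hP
  -- pick u ≠ 0 in P
  have hPne : P ≠ ⊥ := by
    intro h
    rw [h] at hinf
    simp at hinf
  obtain ⟨u, huP, hu0⟩ := Submodule.exists_mem_ne_zero_of_ne_bot hPne
  -- pick v ∈ P not in span of u
  have hspan : Module.finrank ℝ ↥(Submodule.span ℝ {u}) ≤ 1 :=
    finrank_span_le_card _ |>.trans (by simp)
  have hlt : Submodule.span ℝ {u} < P := by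
    rcases lt_or_ge (Module.finrank ℝ ↥(Submodule.span ℝ {u})) (Module.finrank ℝ ↥P) with h | h
    · exact (Submodule.span_le.mpr (by simpa using huP)).lt_of_ne
        (fun he => by rw [he] at h; exact lt_irrefl _ h)
    · omega
  obtain ⟨v, hvP, hvns⟩ := SetLike.exists_of_lt hlt
  have huF : u ∈ F := huP.1
  have huW : u ∈ W := huP.2
  have hvF : v ∈ F := hvP.1
  have hvW : v ∈ W := hvP.2
  have huu : 0 < b u u := hFpos u huF hu0
  -- Gram-Schmidt
  set c : ℝ := b u v / b u u with hc
  set w : V := v - c • u with hw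
  have hw0 : w ≠ 0 := by
    intro h
    apply hvns
    have : v = c • u := by rwa [hw, sub_eq_zero] at h
    rw [this]
    exact Submodule.smul_mem _ _ (Submodule.mem_span_singleton_self u)
  have hwF : w ∈ F := F.sub_mem hvF (F.smul_mem _ huF)
  have hwW : w ∈ W := W.sub_mem hvW (W.smul_mem _ huW)
  have hww : 0 < b w w := hFpos w hwF hw0
  have huw : b u w = 0 := by
    have : b u w = b u v - c * b u u := by
      simp [hw, map_sub, map_smul, smul_eq_mul]
    rw [this, hc, div_mul_cancel₀ _ (ne_of_gt huu), sub_self]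
  -- rescale
  set t : ℝ := Real.sqrt (b u u / b w w) with ht
  have ht2 : t * t = b u u / b w w := Real.mul_self_sqrt (le_of_lt (div_pos huu hww))
  refine ⟨u, t • w, ?_, ?_, huu, ?_, ?_⟩
  · have : b (t • w) (t • w) = (t * t) * b w w := by
      simp [map_smul, smul_eq_mul]; ring
    rw [this, ht2, div_mul_cancel₀ _ (ne_of_gt hww)]
  · simp [map_smul, smul_eq_mul, huw]
  · rw [hsymm]; exact huW
  · rw [hsymm]
    simpa [map_smul, smul_eq_mul] using Or.inr (LinearMap.mem_ker.mp hwW)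
end

section
/- Let L be a free ℤ-module of finite rank ≥ 1 with a ℤ-valued symmetric bilinear form ⟨·,·⟩. Then the subset {[x ⊗ 1] ∈ ℙ(L_ℝ) : x ∈ L is primitive and ⟨x,x⟩ ≡ 0 (mod 4)} of the real projectivization ℙ(L_ℝ) is either empty or dense in ℙ(L_ℝ). -/
open Matrix
open scoped LinearAlgebra.Projectivization

/-- The ℤ-valued bilinear form of the lattice `L = ℤ^n` with Gram matrix `G`. -/
def formZ {n : ℕ} (G : Matrix (Fin n) (Fin n) ℤ) (x y : Fin n → ℤ) : ℤ :=
  x ⬝ᵥ (G *ᵥ y)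

/-- `x ∈ L` is primitive: `x ≠ 0` and `x = m • y` implies `m = ±1`. -/
def IsPrimitive {n : ℕ} (x : Fin n → ℤ) : Prop :=
  x ≠ 0 ∧ ∀ (m : ℤ) (y : Fin n → ℤ), x = m • y → m = 1 ∨ m = -1

lemma formZ_smul' {n : ℕ} (G : Matrix (Fin n) (Fin n) ℤ) (d : ℤ) (x : Fin n → ℤ) :
    formZ G (d • x) (d • x) = d * d * formZ G x x := by
  simp only [formZ, Matrix.mulVec_smul, dotProduct_smul, smul_dotProduct]
  simp only [smul_eq_mul]
  ring

lemma formZ_add_smul' {n : ℕ} (G : Matrix (Fin n) (Fin n) ℤ) (a y : Fin n → ℤ) (c : ℤ) :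
    formZ G (a + c • y) (a + c • y) =
      formZ G a a + c * (formZ G a y + formZ G y a) + c * c * formZ G y y := by
  simp only [formZ, Matrix.mulVec_add, Matrix.mulVec_smul, dotProduct_add, add_dotProduct,
    dotProduct_smul, smul_dotProduct]
  simp only [smul_eq_mul]
  ring

/-- A primitive integer vector has an odd coordinate. -/
lemma exists_odd_coord {n : ℕ} {x : Fin n → ℤ} (hx : IsPrimitive x) : ∃ j, ¬ (2 ∣ x j) := by
  by_contra h
  push_neg at h
  have hx2 : x = (2 : ℤ) • fun i => x i / 2 := by
    funext i
    have := Int.ediv_mul_cancel (h i)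
    simp only [Pi.smul_apply, smul_eq_mul]
    omega
  rcases hx.2 2 _ hx2 with h1 | h1 <;> omega

/-- Factor out the gcd of a nonzero integer vector. -/
lemma exists_primitive_factor {n : ℕ} (z : Fin n → ℤ) (hz : z ≠ 0) :
    ∃ (d : ℤ) (z' : Fin n → ℤ), d ≠ 0 ∧ (∀ i, d ∣ z i) ∧ z = d • z' ∧ IsPrimitive z' := by
  set d := Finset.univ.gcd z with hd
  have hdvd : ∀ i, d ∣ z i := fun i => Finset.gcd_dvd (Finset.mem_univ i)
  have hd0 : d ≠ 0 := by
    intro h0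
    apply hz
    funext i
    have := (Finset.gcd_eq_zero_iff.mp (hd ▸ h0)) i (Finset.mem_univ i)
    simpa using this
  refine ⟨d, fun i => z i / d, hd0, hdvd, ?_, ?_, ?_⟩
  · funext i
    simp only [Pi.smul_apply, smul_eq_mul]
    exact (Int.mul_ediv_cancel' (hdvd i)).symm
  · intro h0
    apply hz
    funext i
    have h1 : z i / d = 0 := congrFun h0 i
    have h2 := Int.ediv_mul_cancel (hdvd i)
    rw [h1] at h2
    simpa using h2.symm
  · intro m w hw
    have hdm : d * m ∣ d := by
      apply Finset.dvd_gcd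
      intro i _
      have h1 : z i / d = m * w i := congrFun hw i
      have h2 : z i = d * (m * w i) := by
        rw [← h1]
        exact (Int.mul_ediv_cancel' (hdvd i)).symm
      exact ⟨w i, by rw [h2]; ring⟩
    have hm1 : m ∣ 1 := by
      have : d * m ∣ d * 1 := by simpa using hdm
      exact (mul_dvd_mul_iff_left hd0).mp this
    exact Int.isUnit_iff.mp (isUnit_of_dvd_one hm1)

/-- Let `L` be a free ℤ-module of finite rank `≥ 1` with a ℤ-valued symmetric bilinear
form.  The set of lines `[x ⊗ 1] ∈ ℙ(L_ℝ)` spanned by primitive `x ∈ L` with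
`⟨x,x⟩ ≡ 0 (mod 4)` is either empty or dense in `ℙ(L_ℝ)`. -/
theorem stmt11 (n : ℕ) (hn : 1 ≤ n) (G : Matrix (Fin n) (Fin n) ℤ) (hsymm : G.IsSymm) :
    {p : ℙ ℝ (Fin n → ℝ) |
        ∃ (x : Fin n → ℤ) (h : (fun i => (x i : ℝ)) ≠ 0),
          IsPrimitive x ∧ (4 : ℤ) ∣ formZ G x x ∧
          p = Projectivization.mk ℝ (fun i => (x i : ℝ)) h} = ∅ ∨
    Dense {p : ℙ ℝ (Fin n → ℝ) |
        ∃ (x : Fin n → ℤ) (h : (fun i => (x i : ℝ)) ≠ 0),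
          IsPrimitive x ∧ (4 : ℤ) ∣ formZ G x x ∧
          p = Projectivization.mk ℝ (fun i => (x i : ℝ)) h} := by
  set S : Set (ℙ ℝ (Fin n → ℝ)) :=
    {p : ℙ ℝ (Fin n → ℝ) |
        ∃ (x : Fin n → ℤ) (h : (fun i => (x i : ℝ)) ≠ 0),
          IsPrimitive x ∧ (4 : ℤ) ∣ formZ G x x ∧
          p = Projectivization.mk ℝ (fun i => (x i : ℝ)) h} with hSdef
  rcases Set.eq_empty_or_nonempty S with hS | ⟨p₀, hp₀⟩
  · left; exact hS
  right
  obtain ⟨x₀, hx₀ne, hx₀prim, hx₀form, -⟩ := hp₀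
  obtain ⟨j, hj⟩ := exists_odd_coord hx₀prim
  -- the quotient map
  have hcont : Continuous (Projectivization.mk' ℝ (V := Fin n → ℝ)) :=
    continuous_quotient_mk'
  have hsurj : Function.Surjective (Projectivization.mk' ℝ (V := Fin n → ℝ)) :=
    fun q => Quotient.inductionOn' q fun v => ⟨v, rfl⟩
  suffices hdense : Dense ((Projectivization.mk' ℝ (V := Fin n → ℝ)) ⁻¹' S) by
    have := hsurj.denseRange.dense_image hcont hdense
    rwa [Set.image_preimage_eq _ hsurj] at this
  rw [Metric.dense_iff]
  rintro ⟨v, hv⟩ r hr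
  -- choose denominators
  obtain ⟨k₀, hk₀⟩ := exists_nat_gt (2 / r)
  set k : ℕ := k₀ + 1 with hkdef
  have hk : (2 : ℝ) / r < k := lt_of_lt_of_le hk₀ (by exact_mod_cast Nat.le_succ k₀)
  have hkpos : (0 : ℝ) < k := by positivity
  set B : ℝ := ∑ i, |(x₀ i : ℝ)| with hBdef
  have hB0 : 0 ≤ B := Finset.sum_nonneg fun i _ => abs_nonneg _
  obtain ⟨N₀, hN₀⟩ := exists_nat_gt (2 * B / r)
  set N : ℕ := N₀ + 1 with hNdef
  have hN : 2 * B / r < N := lt_of_lt_of_le hN₀ (by exact_mod_cast Nat.le_succ N₀)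
  have hNpos : (0 : ℝ) < N := by positivity
  -- the integral approximation
  set y : Fin n → ℤ := fun i => ⌊v i * k⌋ with hydef
  set z : Fin n → ℤ := x₀ + ((4 * (N : ℤ)) • y) with hzdef
  have hzjeq : z j = x₀ j + 4 * ((N : ℤ) * y j) := by
    simp only [hzdef, Pi.add_apply, Pi.smul_apply, smul_eq_mul]
    ring
  have hzj : ¬ (2 : ℤ) ∣ z j := by
    rintro ⟨c, hc⟩
    apply hj
    refine ⟨c - 2 * ((N : ℤ) * y j), ?_⟩
    rw [hzjeq] at hc
    linarith
  have hzne : z ≠ 0 := by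
    intro h0
    apply hzj
    rw [show z j = 0 from by simpa using congrFun h0 j]
    exact dvd_zero 2
  obtain ⟨d, z', hd0, hddvd, hzd, hz'prim⟩ := exists_primitive_factor z hzne
  have hdodd : ¬ (2 : ℤ) ∣ d := fun h => hzj (dvd_trans h (hddvd j))
  -- divisibility of the form
  have h4z : (4 : ℤ) ∣ formZ G z z := by
    rw [hzdef, formZ_add_smul']
    have h1 : (4 : ℤ) ∣ 4 * (N : ℤ) * (formZ G x₀ y + formZ G y x₀) :=
      ⟨(N : ℤ) * (formZ G x₀ y + formZ G y x₀), by ring⟩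
    have h2 : (4 : ℤ) ∣ 4 * (N : ℤ) * (4 * (N : ℤ)) * formZ G y y :=
      ⟨(N : ℤ) * (4 * (N : ℤ)) * formZ G y y, by ring⟩
    exact dvd_add (dvd_add hx₀form h1) h2
  have h4z' : (4 : ℤ) ∣ formZ G z' z' := by
    have h4 : (4 : ℤ) ∣ d * d * formZ G z' z' := by rw [← formZ_smul', ← hzd]; exact h4z
    have h2d : IsCoprime (2 : ℤ) d := (Int.prime_two.irreducible.coprime_iff_not_dvd).mpr hdodd
    have h2dd : IsCoprime (2 : ℤ) (d * d) := h2d.mul_right h2d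
    have h4dd : IsCoprime (4 : ℤ) (d * d) := by
      have := h2dd.mul_left h2dd
      norm_num at this
      exact this
    exact h4dd.dvd_of_dvd_mul_left h4
  -- the real vectors
  set c : ℝ := (4 * (N : ℝ) * k)⁻¹ with hcdef
  have hDne : (4 : ℝ) * N * k ≠ 0 := by positivity
  have hcpos : 0 < c := by rw [hcdef]; positivity
  set p : Fin n → ℝ := fun i => c * (z i : ℝ) with hpdef
  have hzcast : ∀ i, (z i : ℝ) = (x₀ i : ℝ) + 4 * (N : ℝ) * (y i : ℝ) := by
    intro i
    have : z i = x₀ i + 4 * (N : ℤ) * y i := by simp [hzdef]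
    rw [this]; push_cast; ring
  have hz'ne : z' ≠ 0 := hz'prim.1
  have hz'Rne : (fun i => (z' i : ℝ)) ≠ 0 := by
    intro h0
    apply hz'ne
    funext i
    have := congrFun h0 i
    simpa using this
  have hzz' : ∀ i, (z i : ℝ) = (d : ℝ) * (z' i : ℝ) := by
    intro i
    have : z i = d * z' i := by rw [hzd]; simp
    exact_mod_cast congrArg (Int.cast : ℤ → ℝ) this
  have hpr : p = (c * (d : ℝ)) • fun i => (z' i : ℝ) := by
    funext i
    simp only [hpdef, Pi.smul_apply, smul_eq_mul, hzz' i]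
    ring
  have hcd : c * (d : ℝ) ≠ 0 := by
    apply mul_ne_zero (ne_of_gt hcpos)
    exact_mod_cast hd0
  have hpne : p ≠ 0 := by
    rw [hpr]
    intro h0
    apply hz'Rne
    funext i
    have := congrFun h0 i
    simp only [Pi.smul_apply, smul_eq_mul, Pi.zero_apply] at this
    simpa using (mul_eq_zero.mp this).resolve_left hcd
  refine ⟨⟨p, hpne⟩, ?_, ?_⟩
  · -- in the ball
    rw [Metric.mem_ball, Subtype.dist_eq]
    rw [dist_pi_lt_iff hr]
    intro i
    rw [Real.dist_eq]
    have heq : p i - v i = (x₀ i : ℝ) / (4 * N * k) + ((y i : ℝ) / k - v i) := by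
      simp only [hpdef, hzcast i, hcdef]
      field_simp
      ring
    have hb1 : |(x₀ i : ℝ)| / (4 * N * k) < r / 2 := by
      have hle : |(x₀ i : ℝ)| ≤ B :=
        Finset.single_le_sum (f := fun i => |(x₀ i : ℝ)|) (fun i _ => abs_nonneg _)
          (Finset.mem_univ i)
      have hNk : (N : ℝ) ≤ 4 * N * k := by nlinarith [hkpos, hNpos, (by exact_mod_cast Nat.one_le_iff_ne_zero.mpr (by simp [hkdef]) : (1:ℝ) ≤ k)]
      have h1 : |(x₀ i : ℝ)| / (4 * N * k) ≤ B / N := by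
        apply div_le_div₀ hB0 hle hNpos hNk
      have h2 : B / N < r / 2 := by
        rw [div_lt_div_iff₀ hNpos (by norm_num : (0:ℝ) < 2)]
        have := (div_lt_iff₀ hr).mp hN
        linarith
      linarith
    have hb2 : |(y i : ℝ) / k - v i| < r / 2 := by
      have hfl : (y i : ℝ) ≤ v i * k := by
        simp only [hydef]
        exact Int.floor_le _
      have hfl2 : v i * k - 1 < (y i : ℝ) := by
        simp only [hydef]
        exact Int.sub_one_lt_floor _
      have habs : |(y i : ℝ) / k - v i| ≤ 1 / k := by
        have key : |(y i : ℝ) - v i * k| ≤ 1 := by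
          rw [abs_le]; constructor <;> linarith
        have hrw : |(y i : ℝ) / k - v i| = |(y i : ℝ) - v i * k| / k := by
          rw [show (y i : ℝ) / k - v i = ((y i : ℝ) - v i * k) / k by field_simp,
            abs_div, abs_of_pos hkpos]
        rw [hrw]
        gcongr
      have h1k : 1 / (k : ℝ) < r / 2 := by
        rw [div_lt_div_iff₀ hkpos (by norm_num : (0:ℝ) < 2)]
        have := (div_lt_iff₀ hr).mp hk
        linarith
      linarith
    calc |p i - v i| ≤ |(x₀ i : ℝ)| / (4 * N * k) + |(y i : ℝ) / k - v i| := by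
          have habs := abs_add_le ((x₀ i : ℝ) / (4 * N * k)) ((y i : ℝ) / k - v i)
          rw [abs_div, abs_of_pos (show (0:ℝ) < 4 * (N : ℝ) * k by positivity)] at habs
          rw [heq]
          exact habs
      _ < r := by linarith
  · -- in the preimage of S
    show Projectivization.mk' ℝ ⟨p, hpne⟩ ∈ S
    rw [Projectivization.mk'_eq_mk]
    refine ⟨z', hz'Rne, hz'prim, h4z', ?_⟩
    rw [Projectivization.mk_eq_mk_iff]
    refine ⟨Units.mk0 (c * (d : ℝ)) hcd, ?_⟩
    funext i
    show (c * (d : ℝ)) * (z' i : ℝ) = p i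
    simp only [hpdef]
    rw [hzz' i]
    ring
end
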